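/- arXiv:1410.0142 — 3 statements merged into one kernel-verified Lean document; each statement's English description precedes it below -/
import Mathlib

section
/- Let r,s,t,u be integers with ru−st=1 and let φ₁ : G(r,s,t,u) → ℤ/2ℤ be the (unique) group homomorphism sending the generators a ↦ 1, b ↦ 0, c ↦ 0 (it exists since each relator has even exponent sum in a). Then the kernel of φ₁ is isomorphic, as an abstract group, to G(ru+st, −2rs, 2tu, −(ru+st)). If instead ru−st=−1, the kernel of φ₁ is isomorphic to G(−(ru+st), 2rs, −2tu, ru+st). -/
/-- The relators of the presentation of the fundamental group of the sapphire
Sol 3-manifold determined by the matrix `[[r, s], [t, u]]`: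
`a·b·a⁻¹·b`, `c²·a^(−2r)·b^(−s)` and `c·a^(2t)·b^u·c⁻¹·a^(2t)·b^u`,
where `a, b, c` are the generators `of 0, of 1, of 2`. -/
def sapphireRels (r s t u : ℤ) : Set (FreeGroup (Fin 3)) :=
  { FreeGroup.of 0 * FreeGroup.of 1 * (FreeGroup.of 0)⁻¹ * FreeGroup.of 1,
    FreeGroup.of 2 ^ (2 : ℤ) * FreeGroup.of 0 ^ (-(2 * r)) * FreeGroup.of 1 ^ (-s),
    FreeGroup.of 2 * FreeGroup.of 0 ^ (2 * t) * FreeGroup.of 1 ^ u * (FreeGroup.of 2)⁻¹ *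
      FreeGroup.of 0 ^ (2 * t) * FreeGroup.of 1 ^ u }

/-- The fundamental group `G(r,s,t,u)` of the sapphire Sol 3-manifold. -/
abbrev SapphireGroup (r s t u : ℤ) := PresentedGroup (sapphireRels r s t u)

namespace SapphireKer

variable (r s t u : ℤ)

def ga : SapphireGroup r s t u := PresentedGroup.of 0
def gb : SapphireGroup r s t u := PresentedGroup.of 1
def gc : SapphireGroup r s t u := PresentedGroup.of 2

lemma mk_rel_one {x : FreeGroup (Fin 3)} (h : x ∈ sapphireRels r s t u) :
    PresentedGroup.mk (sapphireRels r s t u) x = 1 :=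
  (QuotientGroup.eq_one_iff x).mpr (Subgroup.subset_normalClosure h)

lemma rel1 : ga r s t u * gb r s t u * (ga r s t u)⁻¹ * gb r s t u = 1 := by
  have h := mk_rel_one r s t u (x := FreeGroup.of 0 * FreeGroup.of 1 * (FreeGroup.of 0)⁻¹ *
    FreeGroup.of 1) (Set.mem_insert _ _)
  simp only [map_mul, map_inv] at h
  exact h

lemma rel2 : (gc r s t u) ^ (2:ℤ) * (ga r s t u) ^ (-(2*r)) * (gb r s t u) ^ (-s) = 1 := by
  have h := mk_rel_one r s t u (x := FreeGroup.of 2 ^ (2:ℤ) * FreeGroup.of 0 ^ (-(2*r)) *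
    FreeGroup.of 1 ^ (-s)) (Set.mem_insert_of_mem _ (Set.mem_insert _ _))
  simp only [map_mul, map_zpow] at h
  exact h

lemma rel3 : gc r s t u * (ga r s t u) ^ (2*t) * (gb r s t u) ^ u * (gc r s t u)⁻¹ *
    (ga r s t u) ^ (2*t) * (gb r s t u) ^ u = 1 := by
  have h := mk_rel_one r s t u (x := FreeGroup.of 2 * FreeGroup.of 0 ^ (2*t) *
    FreeGroup.of 1 ^ u * (FreeGroup.of 2)⁻¹ * FreeGroup.of 0 ^ (2*t) * FreeGroup.of 1 ^ u)
    (Set.mem_insert_of_mem _ (Set.mem_insert_of_mem _ rfl))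
  simp only [map_mul, map_zpow, map_inv] at h
  exact h

lemma conj_b : ga r s t u * gb r s t u * (ga r s t u)⁻¹ = (gb r s t u)⁻¹ :=
  mul_eq_one_iff_eq_inv.mp (rel1 r s t u)

lemma conj_b_zpow (y : ℤ) :
    ga r s t u * (gb r s t u) ^ y * (ga r s t u)⁻¹ = (gb r s t u) ^ (-y) := by
  have h : ((MulAut.conj (ga r s t u)) (gb r s t u)) ^ y
      = ga r s t u * (gb r s t u) ^ y * (ga r s t u)⁻¹ := by
    rw [← map_zpow, MulAut.conj_apply]
  rw [← h, MulAut.conj_apply, conj_b, inv_zpow, ← zpow_neg]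

lemma conj_b_zpow_inv (y : ℤ) :
    (ga r s t u)⁻¹ * (gb r s t u) ^ y * ga r s t u = (gb r s t u) ^ (-y) := by
  have := conj_b_zpow r s t u (-y)
  rw [neg_neg] at this
  rw [← this]
  group

lemma comm_ab : Commute ((ga r s t u) ^ (2:ℤ)) (gb r s t u) := by
  have h1 := conj_b_zpow r s t u 1
  have h2 := conj_b_zpow r s t u (-1)
  rw [neg_neg] at h2
  have : ga r s t u * (ga r s t u * (gb r s t u)^(1:ℤ) * (ga r s t u)⁻¹) * (ga r s t u)⁻¹
      = (gb r s t u) ^ (1:ℤ) := by rw [h1, h2]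
  unfold Commute SemiconjBy
  have h3 : (ga r s t u) ^ (2:ℤ) = ga r s t u * ga r s t u := zpow_two _
  rw [h3]
  rw [zpow_one] at this
  calc ga r s t u * ga r s t u * gb r s t u
      = (ga r s t u * (ga r s t u * gb r s t u * (ga r s t u)⁻¹) * (ga r s t u)⁻¹) *
        (ga r s t u * ga r s t u) := by group
    _ = gb r s t u * (ga r s t u * ga r s t u) := by rw [this]


/-- The "lattice" element `a^(2x) b^y`. -/
def L (x y : ℤ) : SapphireGroup r s t u := ((ga r s t u) ^ (2:ℤ)) ^ x * (gb r s t u) ^ y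

lemma comm_AB (x y : ℤ) : Commute (((ga r s t u) ^ (2:ℤ)) ^ x) ((gb r s t u) ^ y) :=
  (comm_ab r s t u).zpow_zpow x y

lemma L_mul (x₁ y₁ x₂ y₂ : ℤ) :
    L r s t u x₁ y₁ * L r s t u x₂ y₂ = L r s t u (x₁+x₂) (y₁+y₂) := by
  unfold L
  have h := (comm_AB r s t u x₂ y₁).symm.eq
  calc ((ga r s t u)^(2:ℤ))^x₁ * (gb r s t u)^y₁ * (((ga r s t u)^(2:ℤ))^x₂ * (gb r s t u)^y₂)
      = ((ga r s t u)^(2:ℤ))^x₁ * ((gb r s t u)^y₁ * ((ga r s t u)^(2:ℤ))^x₂) * (gb r s t u)^y₂ := by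
        group
    _ = ((ga r s t u)^(2:ℤ))^x₁ * (((ga r s t u)^(2:ℤ))^x₂ * (gb r s t u)^y₁) * (gb r s t u)^y₂ := by
        rw [h]
    _ = (((ga r s t u)^(2:ℤ))^x₁ * ((ga r s t u)^(2:ℤ))^x₂) * ((gb r s t u)^y₁ * (gb r s t u)^y₂) := by
        group
    _ = ((ga r s t u)^(2:ℤ))^(x₁+x₂) * (gb r s t u)^(y₁+y₂) := by rw [← zpow_add, ← zpow_add]

lemma L_comm (x₁ y₁ x₂ y₂ : ℤ) :
    Commute (L r s t u x₁ y₁) (L r s t u x₂ y₂) := by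
  unfold Commute SemiconjBy
  rw [L_mul, L_mul, add_comm x₁, add_comm y₁]

lemma L_zpow (x y n : ℤ) : (L r s t u x y) ^ n = L r s t u (n*x) (n*y) := by
  unfold L
  rw [(comm_AB r s t u x y).mul_zpow, ← zpow_mul (ga r s t u ^ (2:ℤ)) x n,
    ← zpow_mul (gb r s t u) y n, mul_comm x n, mul_comm y n]

lemma L_inv (x y : ℤ) : (L r s t u x y)⁻¹ = L r s t u (-x) (-y) := by
  have := L_zpow r s t u x y (-1)
  simpa using this

lemma L_one : L r s t u 0 0 = 1 := by simp [L]

lemma L_a2 : L r s t u 1 0 = (ga r s t u) ^ (2:ℤ) := by simp [L]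

lemma L_b : L r s t u 0 1 = gb r s t u := by simp [L]

lemma rel2' : (gc r s t u) ^ (2:ℤ) = L r s t u r s := by
  have h2 : (ga r s t u) ^ (-(2*r)) = ((ga r s t u)^(2:ℤ))^(-r) := by
    rw [← zpow_mul]; ring_nf
  have h := rel2 r s t u
  rw [h2, mul_assoc] at h
  have h' := mul_eq_one_iff_eq_inv.mp h
  rw [mul_inv_rev, ← zpow_neg, ← zpow_neg, neg_neg, neg_neg] at h'
  rw [h', L]
  exact ((comm_AB r s t u r s).symm.eq)

lemma h2t (x : ℤ) : (ga r s t u) ^ (2*x) = ((ga r s t u)^(2:ℤ))^x := by rw [← zpow_mul]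

lemma rel3' : gc r s t u * L r s t u t u * (gc r s t u)⁻¹ = L r s t u (-t) (-u) := by
  rw [← L_inv]
  have h := rel3 r s t u
  rw [h2t] at h
  have h' : gc r s t u * L r s t u t u * (gc r s t u)⁻¹ * L r s t u t u = 1 := by
    unfold L; rw [← h]; group
  exact mul_eq_one_iff_eq_inv.mp h'

lemma comm_a_A (x : ℤ) : Commute (ga r s t u) (((ga r s t u)^(2:ℤ))^x) :=
  ((Commute.refl (ga r s t u)).zpow_right (2:ℤ)).zpow_right x

lemma conj_a_L (x y : ℤ) :
    ga r s t u * L r s t u x y * (ga r s t u)⁻¹ = L r s t u x (-y) := by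
  unfold L
  have hc := (comm_a_A r s t u x).eq
  calc ga r s t u * (((ga r s t u)^(2:ℤ))^x * (gb r s t u)^y) * (ga r s t u)⁻¹
      = (ga r s t u * ((ga r s t u)^(2:ℤ))^x) * (gb r s t u)^y * (ga r s t u)⁻¹ := by group
    _ = (((ga r s t u)^(2:ℤ))^x * ga r s t u) * (gb r s t u)^y * (ga r s t u)⁻¹ := by rw [hc]
    _ = ((ga r s t u)^(2:ℤ))^x * (ga r s t u * (gb r s t u)^y * (ga r s t u)⁻¹) := by group
    _ = ((ga r s t u)^(2:ℤ))^x * (gb r s t u)^(-y) := by rw [conj_b_zpow]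

lemma conj_ainv_L (x y : ℤ) :
    (ga r s t u)⁻¹ * L r s t u x y * ga r s t u = L r s t u x (-y) := by
  unfold L
  have hc : (ga r s t u)⁻¹ * ((ga r s t u)^(2:ℤ))^x
      = ((ga r s t u)^(2:ℤ))^x * (ga r s t u)⁻¹ := (comm_a_A r s t u x).inv_left.eq
  calc (ga r s t u)⁻¹ * (((ga r s t u)^(2:ℤ))^x * (gb r s t u)^y) * ga r s t u
      = ((ga r s t u)⁻¹ * ((ga r s t u)^(2:ℤ))^x) * (gb r s t u)^y * ga r s t u := by group
    _ = (((ga r s t u)^(2:ℤ))^x * (ga r s t u)⁻¹) * (gb r s t u)^y * ga r s t u := by rw [hc]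
    _ = ((ga r s t u)^(2:ℤ))^x * ((ga r s t u)⁻¹ * (gb r s t u)^y * ga r s t u) := by group
    _ = ((ga r s t u)^(2:ℤ))^x * (gb r s t u)^(-y) := by rw [conj_b_zpow_inv]


/-! ### A twisted extension of a group by `C2` -/

/-- Data for a twisted (cyclic of order 2) extension: an endomorphism `σ` and an element `m`
fixed by `σ` such that `σ ∘ σ` is conjugation by `m`. -/
structure CEData (N : Type*) [Group N] where
  σ : N →* N
  m : N
  hm : σ m = m
  hσσ : ∀ x, σ (σ x) = m * x * m⁻¹

/-- The carrier of the twisted extension. -/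
@[ext] structure CE {N : Type*} [Group N] (d : CEData N) where
  x : N
  e : Bool

namespace CE

variable {N : Type*} [Group N] {d : CEData N}

/-- Multiplication of the twisted extension. -/
def cemul (p q : CE d) : CE d :=
  ⟨p.x * (if p.e then d.σ q.x else q.x) * (if p.e && q.e then d.m else 1), xor p.e q.e⟩

/-- Inversion of the twisted extension. -/
def ceinv (p : CE d) : CE d :=
  if p.e then ⟨d.m⁻¹ * (d.σ p.x)⁻¹, true⟩ else ⟨p.x⁻¹, false⟩

lemma cemul_assoc (p q w : CE d) : cemul (cemul p q) w = cemul p (cemul q w) := by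
  obtain ⟨x, ε⟩ := p; obtain ⟨y, δ⟩ := q; obtain ⟨z, η⟩ := w
  cases ε <;> cases δ <;> cases η <;>
    simp [cemul, d.hσσ, d.hm] <;>
    group

lemma ce_one_mul (p : CE d) : cemul ⟨1, false⟩ p = p := by
  obtain ⟨x, ε⟩ := p; cases ε <;> simp [cemul]

lemma ce_mul_one (p : CE d) : cemul p ⟨1, false⟩ = p := by
  obtain ⟨x, ε⟩ := p; cases ε <;> simp [cemul]

lemma ce_inv_mul (p : CE d) : cemul (ceinv p) p = ⟨1, false⟩ := by
  obtain ⟨x, ε⟩ := p; cases ε <;> simp [cemul, ceinv, d.hm]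

instance : Group (CE d) where
  mul := cemul
  one := ⟨1, false⟩
  inv := ceinv
  div p q := cemul p (ceinv q)
  mul_assoc := cemul_assoc
  one_mul := ce_one_mul
  mul_one := ce_mul_one
  inv_mul_cancel := ce_inv_mul

lemma mul_def (p q : CE d) : p * q =
    ⟨p.x * (if p.e then d.σ q.x else q.x) * (if p.e && q.e then d.m else 1), xor p.e q.e⟩ := rfl

lemma one_def : (1 : CE d) = ⟨1, false⟩ := rfl

lemma inv_def (p : CE d) :
    p⁻¹ = if p.e then (⟨d.m⁻¹ * (d.σ p.x)⁻¹, true⟩ : CE d) else ⟨p.x⁻¹, false⟩ := rfl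

/-- The canonical inclusion of `N` into the twisted extension. -/
def ι (d : CEData N) : N →* CE d where
  toFun x := ⟨x, false⟩
  map_one' := rfl
  map_mul' x y := by simp [mul_def]

@[simp] lemma ι_apply (x : N) : (ι d x) = (⟨x, false⟩ : CE d) := rfl

/-- The projection onto `C2`. -/
def π (d : CEData N) : CE d →* Multiplicative (ZMod 2) where
  toFun p := if p.e then Multiplicative.ofAdd 1 else 1
  map_one' := rfl
  map_mul' p q := by
    obtain ⟨x, ε⟩ := p; obtain ⟨y, δ⟩ := q
    cases ε <;> cases δ <;> simp [mul_def] <;> decide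

lemma π_eq_one_iff (p : CE d) : π d p = 1 ↔ p.e = false := by
  obtain ⟨x, ε⟩ := p
  cases ε <;> simp [π] <;> decide

lemma A2 : (⟨1, true⟩ : CE d) * ⟨1, true⟩ = ι d d.m := by
  simp [mul_def]

lemma x_of_mul_of_e_false (p q : CE d) (hp : p.e = false) : (p * q).x = p.x * q.x := by
  obtain ⟨x, ε⟩ := p; obtain ⟨y, δ⟩ := q
  subst hp
  simp [mul_def]

end CE


/-! ### generic helpers -/

section Helpers
variable {G : Type*} [Group G]

lemma zpow_neg_two_mul (g : G) (k : ℤ) : g ^ (-(2*k)) = (g ^ (2:ℤ)) ^ (-k) := by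
  rw [← zpow_mul]; ring_nf

lemma zpow_two_mul' (g : G) (k : ℤ) : g ^ (2*k) = (g ^ (2:ℤ)) ^ k := by
  rw [← zpow_mul]

lemma conj_comm_eq {g x : G} (h : Commute g x) : g * x * g⁻¹ = x := by
  rw [h.eq]; group

lemma conj_comm_eq' {g x : G} (h : Commute g x) : g⁻¹ * x * g = x := by
  rw [h.inv_left.eq]; group

lemma sandwich (c x y z : G) (hxy : x * y = z) (h : c * z * c⁻¹ * z = 1) :
    c * x * y * c⁻¹ * x * y = 1 := by
  have h2 : c * x * y * c⁻¹ * x * y = c * (x*y) * c⁻¹ * (x*y) := by group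
  rw [h2, hxy, h]

end Helpers

lemma L_eq (x y x' y' : ℤ) (hx : x = x') (hy : y = y') :
    L r s t u x y = L r s t u x' y' := by rw [hx, hy]

lemma L_eq_one (x y : ℤ) (hx : x = 0) (hy : y = 0) : L r s t u x y = 1 := by
  rw [hx, hy]; exact L_one r s t u

/-! ### the map θ from the target group to `G` -/

section Main

variable (r s t u R S T U : ℤ)

/-- images of the generators of the target presentation in `G`. -/
def fθ : Fin 3 → SapphireGroup r s t u := fun i => match i with
  | 0 => ga r s t u * gc r s t u * (ga r s t u)⁻¹
  | 1 => L r s t u t (-u)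
  | 2 => gc r s t u

@[simp] lemma fθ_0 : fθ r s t u 0 = ga r s t u * gc r s t u * (ga r s t u)⁻¹ := rfl
@[simp] lemma fθ_1 : fθ r s t u 1 = L r s t u t (-u) := rfl
@[simp] lemma fθ_2 : fθ r s t u 2 = gc r s t u := rfl

lemma w_sq : (ga r s t u * gc r s t u * (ga r s t u)⁻¹) ^ (2:ℤ) = L r s t u r (-s) := by
  have h1 : (ga r s t u * gc r s t u * (ga r s t u)⁻¹) ^ (2:ℤ)
      = ga r s t u * (gc r s t u) ^ (2:ℤ) * (ga r s t u)⁻¹ := by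
    rw [zpow_two, zpow_two]; group
  rw [h1, rel2', conj_a_L]

lemma θobl (hdet : r*u - s*t = 1) (hR : R = r*u+s*t) (hS : S = -(2*r*s)) (hT : T = 2*t*u)
    (hU : U = -(r*u+s*t)) :
    ∀ w ∈ sapphireRels R S T U, FreeGroup.lift (fθ r s t u) w = 1 := by
  subst hR hS hT hU
  intro w hw
  rcases hw with rfl | rfl | rfl
  · simp only [map_mul, map_inv, FreeGroup.lift_apply_of, fθ_0, fθ_1]
    have h1 : (ga r s t u)⁻¹ * L r s t u t (-u) * ga r s t u = L r s t u t u := by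
      simpa using conj_ainv_L r s t u t (-u)
    have h3 : ga r s t u * L r s t u (-t) (-u) * (ga r s t u)⁻¹ = L r s t u (-t) u := by
      simpa using conj_a_L r s t u (-t) (-u)
    calc ga r s t u * gc r s t u * (ga r s t u)⁻¹ * L r s t u t (-u) *
          (ga r s t u * gc r s t u * (ga r s t u)⁻¹)⁻¹ * L r s t u t (-u)
        = ga r s t u * (gc r s t u * ((ga r s t u)⁻¹ * L r s t u t (-u) * ga r s t u) *
            (gc r s t u)⁻¹) * (ga r s t u)⁻¹ * L r s t u t (-u) := by group
      _ = ga r s t u * (gc r s t u * L r s t u t u * (gc r s t u)⁻¹) * (ga r s t u)⁻¹ *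
            L r s t u t (-u) := by rw [h1]
      _ = (ga r s t u * L r s t u (-t) (-u) * (ga r s t u)⁻¹) * L r s t u t (-u) := by
            rw [rel3']
      _ = L r s t u (-t) u * L r s t u t (-u) := by rw [h3]
      _ = 1 := by rw [L_mul]; exact L_eq_one r s t u _ _ (by ring) (by ring)
  · simp only [map_mul, map_zpow, FreeGroup.lift_apply_of, fθ_0, fθ_1, fθ_2]
    rw [zpow_neg_two_mul, w_sq, L_zpow, L_zpow, rel2', L_mul, L_mul]
    exact L_eq_one r s t u _ _ (by linear_combination (-r)*hdet) (by linear_combination (-s)*hdet)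
  · simp only [map_mul, map_zpow, map_inv, FreeGroup.lift_apply_of, fθ_0, fθ_1, fθ_2]
    rw [zpow_two_mul', w_sq, L_zpow, L_zpow]
    exact sandwich _ _ _ (L r s t u t u)
      (by rw [L_mul]
          exact L_eq r s t u _ _ _ _ (by linear_combination t*hdet) (by linear_combination u*hdet))
      (by rw [rel3', L_mul]; exact L_eq_one r s t u _ _ (by ring) (by ring))


/-- The homomorphism θ from the target presented group to `G`. -/
def θmap (hdet : r*u - s*t = 1) (hR : R = r*u+s*t) (hS : S = -(2*r*s)) (hT : T = 2*t*u)
    (hU : U = -(r*u+s*t)) : SapphireGroup R S T U →* SapphireGroup r s t u :=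
  PresentedGroup.toGroup (θobl r s t u R S T U hdet hR hS hT hU)

variable (hdet : r*u - s*t = 1) (hR : R = r*u+s*t) (hS : S = -(2*r*s)) (hT : T = 2*t*u)
    (hU : U = -(r*u+s*t))

@[simp] lemma θmap_0 : θmap r s t u R S T U hdet hR hS hT hU (ga R S T U)
    = ga r s t u * gc r s t u * (ga r s t u)⁻¹ := PresentedGroup.toGroup.of _
@[simp] lemma θmap_1 : θmap r s t u R S T U hdet hR hS hT hU (gb R S T U)
    = L r s t u t (-u) := PresentedGroup.toGroup.of _
@[simp] lemma θmap_2 : θmap r s t u R S T U hdet hR hS hT hU (gc R S T U)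
    = gc r s t u := PresentedGroup.toGroup.of _

lemma θmap_L (x y : ℤ) : θmap r s t u R S T U hdet hR hS hT hU (L R S T U x y)
    = L r s t u (x*r + y*t) (x*(-s) + y*(-u)) := by
  rw [show L R S T U x y = ((ga R S T U)^(2:ℤ))^x * (gb R S T U)^y from rfl]
  simp only [map_mul, map_zpow, θmap_0, θmap_1]
  rw [w_sq, L_zpow, L_zpow, L_mul]

/-! ### the twisting endomorphism σ of the target group -/

lemma conj_zpow_helper {G : Type*} [Group G] (g x : G) (n : ℤ) :
    (g*x*g⁻¹)^n = g*x^n*g⁻¹ := by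
  have h : g*x*g⁻¹ = (MulAut.conj g) x := rfl
  rw [h, ← map_zpow, MulAut.conj_apply]

/-- images of the generators under the twisting endomorphism. -/
def fσ : Fin 3 → SapphireGroup R S T U := fun i => match i with
  | 0 => L R S T U u (-s) * gc R S T U * (L R S T U u (-s))⁻¹
  | 1 => L R S T U T U
  | 2 => ga R S T U

@[simp] lemma fσ_0 : fσ s u R S T U 0
    = L R S T U u (-s) * gc R S T U * (L R S T U u (-s))⁻¹ := rfl
@[simp] lemma fσ_1 : fσ s u R S T U 1 = L R S T U T U := rfl
@[simp] lemma fσ_2 : fσ s u R S T U 2 = ga R S T U := rfl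

lemma σobl (hRU : R + U = 0) (hdet2 : R*R + S*T = 1) :
    ∀ w ∈ sapphireRels R S T U, FreeGroup.lift (fσ s u R S T U) w = 1 := by
  intro w hw
  have hc1 : ∀ x y : ℤ, L R S T U u (-s) * L R S T U x y * (L R S T U u (-s))⁻¹
      = L R S T U x y := fun x y => conj_comm_eq (L_comm R S T U u (-s) x y)
  have hc2 : ∀ x y : ℤ, (L R S T U u (-s))⁻¹ * L R S T U x y * L R S T U u (-s)
      = L R S T U x y := fun x y => conj_comm_eq' (L_comm R S T U u (-s) x y)
  rcases hw with rfl | rfl | rfl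
  · simp only [map_mul, map_inv, FreeGroup.lift_apply_of, fσ_0, fσ_1]
    calc L R S T U u (-s) * gc R S T U * (L R S T U u (-s))⁻¹ * L R S T U T U *
          (L R S T U u (-s) * gc R S T U * (L R S T U u (-s))⁻¹)⁻¹ * L R S T U T U
        = L R S T U u (-s) * (gc R S T U * ((L R S T U u (-s))⁻¹ * L R S T U T U *
            L R S T U u (-s)) * (gc R S T U)⁻¹) * (L R S T U u (-s))⁻¹ * L R S T U T U := by
          group
      _ = L R S T U u (-s) * (gc R S T U * L R S T U T U * (gc R S T U)⁻¹) *
            (L R S T U u (-s))⁻¹ * L R S T U T U := by rw [hc2]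
      _ = (L R S T U u (-s) * L R S T U (-T) (-U) * (L R S T U u (-s))⁻¹) *
            L R S T U T U := by rw [rel3']
      _ = L R S T U (-T) (-U) * L R S T U T U := by rw [hc1]
      _ = 1 := by rw [L_mul]; exact L_eq_one R S T U _ _ (by ring) (by ring)
  · simp only [map_mul, map_zpow, FreeGroup.lift_apply_of, fσ_0, fσ_1, fσ_2]
    rw [conj_zpow_helper, zpow_neg_two_mul, rel2', L_zpow, hc1, L_zpow,
      show (ga R S T U)^(2:ℤ) = L R S T U 1 0 from (L_a2 R S T U).symm, L_mul, L_mul]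
    exact L_eq_one R S T U _ _ (by linear_combination -hdet2)
      (by linear_combination (-S)*hRU)
  · simp only [map_mul, map_zpow, map_inv, FreeGroup.lift_apply_of, fσ_0, fσ_1, fσ_2]
    rw [conj_zpow_helper, zpow_two_mul', rel2', L_zpow, hc1, L_zpow]
    exact sandwich _ _ _ (gb R S T U)
      (by rw [L_mul]
          exact (L_eq R S T U _ _ 0 1 (by linear_combination T*hRU)
            (by linear_combination (U - R)*hRU + hdet2)).trans (L_b R S T U))
      (rel1 R S T U)

/-- The twisting endomorphism σ of the target group. -/
def σmap (hRU : R + U = 0) (hdet2 : R*R + S*T = 1) :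
    SapphireGroup R S T U →* SapphireGroup R S T U :=
  PresentedGroup.toGroup (σobl s u R S T U hRU hdet2)

variable (hRU : R + U = 0) (hdet2 : R*R + S*T = 1)

@[simp] lemma σmap_0 : σmap s u R S T U hRU hdet2 (ga R S T U)
    = L R S T U u (-s) * gc R S T U * (L R S T U u (-s))⁻¹ := PresentedGroup.toGroup.of _
@[simp] lemma σmap_1 : σmap s u R S T U hRU hdet2 (gb R S T U)
    = L R S T U T U := PresentedGroup.toGroup.of _
@[simp] lemma σmap_2 : σmap s u R S T U hRU hdet2 (gc R S T U)
    = ga R S T U := PresentedGroup.toGroup.of _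

lemma σmap_L (x y : ℤ) : σmap s u R S T U hRU hdet2 (L R S T U x y)
    = L R S T U (x*R + y*T) (x*S + y*U) := by
  rw [show L R S T U x y = ((ga R S T U)^(2:ℤ))^x * (gb R S T U)^y from rfl]
  simp only [map_mul, map_zpow, σmap_0, σmap_1]
  rw [conj_zpow_helper, rel2', conj_comm_eq (L_comm R S T U u (-s) R S), L_zpow, L_zpow, L_mul]


lemma σ_fix_m (hdet : r*u - s*t = 1) (hR : R = r*u+s*t) (hS : S = -(2*r*s)) (hT : T = 2*t*u)
    (hU : U = -(r*u+s*t)) :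
    σmap s u R S T U hRU hdet2 (L R S T U u (-s)) = L R S T U u (-s) := by
  rw [σmap_L]
  exact L_eq R S T U _ _ _ _ (by linear_combination u*hR + (-s)*hT + u*hdet)
    (by linear_combination u*hS + (-s)*hU + (-s)*hdet)

lemma σσ_eq (hdet : r*u - s*t = 1) (hR : R = r*u+s*t) (hS : S = -(2*r*s)) (hT : T = 2*t*u)
    (hU : U = -(r*u+s*t)) :
    ∀ x, σmap s u R S T U hRU hdet2 (σmap s u R S T U hRU hdet2 x)
    = L R S T U u (-s) * x * (L R S T U u (-s))⁻¹ := by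
  have h : (σmap s u R S T U hRU hdet2).comp (σmap s u R S T U hRU hdet2)
      = (MulAut.conj (L R S T U u (-s))).toMonoidHom := by
    apply PresentedGroup.ext
    intro i
    fin_cases i
    · show σmap s u R S T U hRU hdet2 (σmap s u R S T U hRU hdet2 (ga R S T U))
        = (MulAut.conj (L R S T U u (-s))) (ga R S T U)
      rw [σmap_0, map_mul, map_mul, map_inv, σmap_2,
        σ_fix_m r s t u R S T U hRU hdet2 hdet hR hS hT hU, MulAut.conj_apply]
    · show σmap s u R S T U hRU hdet2 (σmap s u R S T U hRU hdet2 (gb R S T U))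
        = (MulAut.conj (L R S T U u (-s))) (gb R S T U)
      rw [σmap_1, σmap_L, MulAut.conj_apply]
      have hz : (T*R + U*T : ℤ) = 0 := by linear_combination T*hRU
      have hone : (T*S + U*U : ℤ) = 1 := by linear_combination (U - R)*hRU + hdet2
      rw [hz, hone, L_b]
      have hcm : Commute (L R S T U u (-s)) (gb R S T U) :=
        (L_b R S T U) ▸ L_comm R S T U u (-s) 0 1
      exact (conj_comm_eq hcm).symm
    · show σmap s u R S T U hRU hdet2 (σmap s u R S T U hRU hdet2 (gc R S T U))
        = (MulAut.conj (L R S T U u (-s))) (gc R S T U)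
      rw [σmap_2, σmap_0, MulAut.conj_apply]
  intro x
  calc σmap s u R S T U hRU hdet2 (σmap s u R S T U hRU hdet2 x)
      = ((σmap s u R S T U hRU hdet2).comp (σmap s u R S T U hRU hdet2)) x := rfl
    _ = (MulAut.conj (L R S T U u (-s))).toMonoidHom x := by rw [h]
    _ = L R S T U u (-s) * x * (L R S T U u (-s))⁻¹ := rfl

lemma hRU_of (hR : R = r*u+s*t) (hU : U = -(r*u+s*t)) : R + U = 0 := by
  rw [hR, hU]; ring

lemma hdet2_of (hdet : r*u - s*t = 1) (hR : R = r*u+s*t) (hS : S = -(2*r*s)) (hT : T = 2*t*u) :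
    R*R + S*T = 1 := by
  rw [hR, hS, hT]; linear_combination (r*u - s*t + 1)*hdet

/-- The twisted-extension data on the target group. -/
def dd : CEData (SapphireGroup R S T U) where
  σ := σmap s u R S T U (hRU_of r s t u R U hR hU) (hdet2_of r s t u R S T hdet hR hS hT)
  m := L R S T U u (-s)
  hm := σ_fix_m r s t u R S T U (hRU_of r s t u R U hR hU)
    (hdet2_of r s t u R S T hdet hR hS hT) hdet hR hS hT hU
  hσσ := σσ_eq r s t u R S T U (hRU_of r s t u R U hR hU)
    (hdet2_of r s t u R S T hdet hR hS hT) hdet hR hS hT hU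

@[simp] lemma dd_σ : (dd r s t u R S T U hdet hR hS hT hU).σ
    = σmap s u R S T U (hRU_of r s t u R U hR hU)
      (hdet2_of r s t u R S T hdet hR hS hT) := rfl

@[simp] lemma dd_m : (dd r s t u R S T U hdet hR hS hT hU).m = L R S T U u (-s) := rfl

/-- images of the generators of `G` in the twisted extension. -/
def fΦ : Fin 3 → CE (dd r s t u R S T U hdet hR hS hT hU) := fun i => match i with
  | 0 => ⟨1, true⟩
  | 1 => CE.ι _ (L R S T U t (-r))
  | 2 => CE.ι _ (gc R S T U)

@[simp] lemma fΦ_0 : fΦ r s t u R S T U hdet hR hS hT hU 0 = ⟨1, true⟩ := rfl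
@[simp] lemma fΦ_1 : fΦ r s t u R S T U hdet hR hS hT hU 1
    = CE.ι _ (L R S T U t (-r)) := rfl
@[simp] lemma fΦ_2 : fΦ r s t u R S T U hdet hR hS hT hU 2
    = CE.ι _ (gc R S T U) := rfl

lemma σ_β : σmap s u R S T U (hRU_of r s t u R U hR hU)
      (hdet2_of r s t u R S T hdet hR hS hT) (L R S T U t (-r))
    = (L R S T U t (-r))⁻¹ := by
  rw [σmap_L, L_inv]
  exact L_eq R S T U _ _ _ _ (by linear_combination t*hR + (-r)*hT + (-t)*hdet)
    (by linear_combination t*hS + (-r)*hU + r*hdet)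

lemma AE_sq : ((⟨1, true⟩ : CE (dd r s t u R S T U hdet hR hS hT hU)))^(2:ℤ)
    = CE.ι _ (L R S T U u (-s)) := by
  rw [zpow_two, CE.A2, dd_m]

lemma Φobl : ∀ w ∈ sapphireRels r s t u,
    FreeGroup.lift (fΦ r s t u R S T U hdet hR hS hT hU) w = 1 := by
  intro w hw
  set d := dd r s t u R S T U hdet hR hS hT hU with hd
  set σh := σmap s u R S T U (hRU_of r s t u R U hR hU)
      (hdet2_of r s t u R S T hdet hR hS hT) with hσh
  rcases hw with rfl | rfl | rfl
  · simp only [map_mul, map_inv, FreeGroup.lift_apply_of, fΦ_0, fΦ_1]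
    have h1 : (⟨1,true⟩ : CE d) * CE.ι d (L R S T U t (-r))
        = ⟨σh (L R S T U t (-r)), true⟩ := by
      simp [CE.mul_def, hd, hσh]
    have h2 : (⟨σh (L R S T U t (-r)), true⟩ : CE d) * (⟨1,true⟩ : CE d)⁻¹
        = ⟨(L R S T U t (-r))⁻¹, false⟩ := by
      rw [CE.inv_def]
      simp only [if_true]
      simp [CE.mul_def, hd, hσh, map_one, σ_β r s t u R S T U hdet hR hS hT hU,
        σ_fix_m r s t u R S T U (hRU_of r s t u R U hR hU)
          (hdet2_of r s t u R S T hdet hR hS hT) hdet hR hS hT hU]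
    have h3 : (⟨(L R S T U t (-r))⁻¹, false⟩ : CE d) * CE.ι d (L R S T U t (-r)) = 1 := by
      simp [CE.mul_def, CE.one_def]
    rw [h1, h2, h3]
  · simp only [map_mul, map_zpow, FreeGroup.lift_apply_of, fΦ_0, fΦ_1, fΦ_2]
    rw [zpow_neg_two_mul, AE_sq, ← map_zpow, ← map_zpow, ← map_zpow, ← map_mul, ← map_mul]
    rw [show (gc R S T U)^(2:ℤ) * (L R S T U u (-s))^(-r) * (L R S T U t (-r))^(-s) = 1 from ?_,
      map_one]
    rw [rel2', L_zpow, L_zpow, L_mul, L_mul]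
    exact L_eq_one R S T U _ _ (by linear_combination hR) (by linear_combination hS)
  · simp only [map_mul, map_zpow, map_inv, FreeGroup.lift_apply_of, fΦ_0, fΦ_1, fΦ_2]
    rw [zpow_two_mul', AE_sq, ← map_zpow, ← map_zpow, ← map_inv,
      ← map_mul, ← map_mul, ← map_mul, ← map_mul, ← map_mul]
    rw [show gc R S T U * (L R S T U u (-s))^t * (L R S T U t (-r))^u * (gc R S T U)⁻¹ *
        (L R S T U u (-s))^t * (L R S T U t (-r))^u = 1 from ?_, map_one]
    rw [L_zpow, L_zpow]
    exact sandwich _ _ _ (L R S T U T U)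
      (by rw [L_mul]
          exact L_eq R S T U _ _ _ _ (by linear_combination -hT) (by linear_combination -hU))
      (by rw [rel3', L_mul]; exact L_eq_one R S T U _ _ (by ring) (by ring))

/-- The homomorphism Φ from `G` to the twisted extension. -/
def Φmap : SapphireGroup r s t u →* CE (dd r s t u R S T U hdet hR hS hT hU) :=
  PresentedGroup.toGroup (Φobl r s t u R S T U hdet hR hS hT hU)

@[simp] lemma Φmap_0 : Φmap r s t u R S T U hdet hR hS hT hU (ga r s t u)
    = ⟨1, true⟩ := PresentedGroup.toGroup.of _
@[simp] lemma Φmap_1 : Φmap r s t u R S T U hdet hR hS hT hU (gb r s t u)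
    = CE.ι _ (L R S T U t (-r)) := PresentedGroup.toGroup.of _
@[simp] lemma Φmap_2 : Φmap r s t u R S T U hdet hR hS hT hU (gc r s t u)
    = CE.ι _ (gc R S T U) := PresentedGroup.toGroup.of _

/-! ### assembling the isomorphism -/

lemma φθ_ker (φ : SapphireGroup r s t u →* Multiplicative (ZMod 2))
    (ha : φ (PresentedGroup.of 0) = Multiplicative.ofAdd (1 : ZMod 2))
    (hb : φ (PresentedGroup.of 1) = Multiplicative.ofAdd (0 : ZMod 2))
    (hc : φ (PresentedGroup.of 2) = Multiplicative.ofAdd (0 : ZMod 2)) :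
    ∀ x, θmap r s t u R S T U hdet hR hS hT hU x ∈ φ.ker := by
  have ha' : φ (ga r s t u) = Multiplicative.ofAdd (1 : ZMod 2) := ha
  have hb' : φ (gb r s t u) = Multiplicative.ofAdd (0 : ZMod 2) := hb
  have hc' : φ (gc r s t u) = Multiplicative.ofAdd (0 : ZMod 2) := hc
  have h : φ.comp (θmap r s t u R S T U hdet hR hS hT hU) = 1 := by
    apply PresentedGroup.ext
    intro i; fin_cases i
    · show φ (θmap r s t u R S T U hdet hR hS hT hU (ga R S T U))
        = (1 : SapphireGroup R S T U →* Multiplicative (ZMod 2)) (ga R S T U)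
      rw [θmap_0, map_mul, map_mul, map_inv, ha', hc', MonoidHom.one_apply]
      decide
    · show φ (θmap r s t u R S T U hdet hR hS hT hU (gb R S T U))
        = (1 : SapphireGroup R S T U →* Multiplicative (ZMod 2)) (gb R S T U)
      rw [θmap_1, show L r s t u t (-u) = ((ga r s t u)^(2:ℤ))^t * (gb r s t u)^(-u) from rfl,
        map_mul, map_zpow, map_zpow, map_zpow, ha', hb', MonoidHom.one_apply]
      rw [show (Multiplicative.ofAdd (1 : ZMod 2))^(2:ℤ) = 1 from by rw [zpow_two]; decide,
        one_zpow, show Multiplicative.ofAdd (0 : ZMod 2) = 1 from rfl, one_zpow, mul_one]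
    · show φ (θmap r s t u R S T U hdet hR hS hT hU (gc R S T U))
        = (1 : SapphireGroup R S T U →* Multiplicative (ZMod 2)) (gc R S T U)
      rw [θmap_2, hc', MonoidHom.one_apply]
      rfl
  intro x
  exact MonoidHom.mem_ker.mpr (by
    rw [show φ (θmap r s t u R S T U hdet hR hS hT hU x)
      = (φ.comp (θmap r s t u R S T U hdet hR hS hT hU)) x from rfl, h, MonoidHom.one_apply])

lemma πΦ_eq (φ : SapphireGroup r s t u →* Multiplicative (ZMod 2))
    (ha : φ (PresentedGroup.of 0) = Multiplicative.ofAdd (1 : ZMod 2))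
    (hb : φ (PresentedGroup.of 1) = Multiplicative.ofAdd (0 : ZMod 2))
    (hc : φ (PresentedGroup.of 2) = Multiplicative.ofAdd (0 : ZMod 2)) :
    (CE.π (dd r s t u R S T U hdet hR hS hT hU)).comp
      (Φmap r s t u R S T U hdet hR hS hT hU) = φ := by
  apply PresentedGroup.ext
  intro i; fin_cases i
  · show CE.π (dd r s t u R S T U hdet hR hS hT hU)
      (Φmap r s t u R S T U hdet hR hS hT hU (ga r s t u)) = φ (ga r s t u)
    rw [Φmap_0]
    exact ha.symm
  · show CE.π (dd r s t u R S T U hdet hR hS hT hU)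
      (Φmap r s t u R S T U hdet hR hS hT hU (gb r s t u)) = φ (gb r s t u)
    rw [Φmap_1]
    exact hb.symm
  · show CE.π (dd r s t u R S T U hdet hR hS hT hU)
      (Φmap r s t u R S T U hdet hR hS hT hU (gc r s t u)) = φ (gc r s t u)
    rw [Φmap_2]
    exact hc.symm

theorem main (hdet : r*u - s*t = 1) (hR : R = r*u+s*t) (hS : S = -(2*r*s)) (hT : T = 2*t*u)
    (hU : U = -(r*u+s*t))
    (φ : SapphireGroup r s t u →* Multiplicative (ZMod 2))
    (ha : φ (PresentedGroup.of 0) = Multiplicative.ofAdd (1 : ZMod 2))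
    (hb : φ (PresentedGroup.of 1) = Multiplicative.ofAdd (0 : ZMod 2))
    (hc : φ (PresentedGroup.of 2) = Multiplicative.ofAdd (0 : ZMod 2)) :
    Nonempty (φ.ker ≃* SapphireGroup R S T U) := by
  set σh := σmap s u R S T U (hRU_of r s t u R U hR hU)
    (hdet2_of r s t u R S T hdet hR hS hT) with hσdef
  set θ := θmap r s t u R S T U hdet hR hS hT hU with hθdef
  set d := dd r s t u R S T U hdet hR hS hT hU with hddef
  set Φ := Φmap r s t u R S T U hdet hR hS hT hU with hΦdef
  have hker : ∀ x, θ x ∈ φ.ker := φθ_ker r s t u R S T U hdet hR hS hT hU φ ha hb hc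
  set θ₀ : SapphireGroup R S T U →* φ.ker := θ.codRestrict φ.ker hker with hθ₀def
  -- the left inverse ψ built from Φ
  have hπΦ : (CE.π d).comp Φ = φ := πΦ_eq r s t u R S T U hdet hR hS hT hU φ ha hb hc
  have he : ∀ k : φ.ker, (Φ (k : SapphireGroup r s t u)).e = false := by
    intro k
    refine (CE.π_eq_one_iff _).mp ?_
    rw [show CE.π d (Φ (k : SapphireGroup r s t u)) = ((CE.π d).comp Φ) (k : _) from rfl, hπΦ]
    exact k.2
  set ψ : φ.ker →* SapphireGroup R S T U := MonoidHom.mk'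
    (fun k => (Φ (k : SapphireGroup r s t u)).x)
    (fun k l => by
      have h1 : (Φ ((k*l : φ.ker) : SapphireGroup r s t u)).x
          = (Φ (k : SapphireGroup r s t u)).x * (Φ (l : SapphireGroup r s t u)).x := by
        rw [show ((k*l : φ.ker) : SapphireGroup r s t u)
             = (k : SapphireGroup r s t u) * (l : SapphireGroup r s t u) from rfl, map_mul]
        exact CE.x_of_mul_of_e_false _ _ (he k)
      exact h1) with hψdef
  -- ψ ∘ θ₀ = id
  have hcompose : ∀ x, ψ (θ₀ x) = x := by
    have h : ψ.comp θ₀ = MonoidHom.id (SapphireGroup R S T U) := by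
      apply PresentedGroup.ext
      intro i; fin_cases i
      · show (Φ (θ (ga R S T U))).x = ga R S T U
        rw [hθdef, θmap_0, map_mul, map_mul, map_inv, hΦdef, Φmap_0, Φmap_2]
        have e1 : (⟨1,true⟩ : CE d) * CE.ι d (gc R S T U) = ⟨ga R S T U, true⟩ := by
          simp [CE.mul_def, hddef, hσdef]
        have e2 : (⟨ga R S T U, true⟩ : CE d) * (⟨1,true⟩ : CE d)⁻¹ = ⟨ga R S T U, false⟩ := by
          rw [CE.inv_def]
          simp only [if_true]
          simp [CE.mul_def, hddef, map_one, map_inv,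
            σ_fix_m r s t u R S T U (hRU_of r s t u R U hR hU)
              (hdet2_of r s t u R S T hdet hR hS hT) hdet hR hS hT hU]
        rw [hddef] at e1 e2
        rw [e1, e2]
      · show (Φ (θ (gb R S T U))).x = gb R S T U
        rw [hθdef, θmap_1,
          show L r s t u t (-u) = ((ga r s t u)^(2:ℤ))^t * (gb r s t u)^(-u) from rfl,
          map_mul, map_zpow, map_zpow, map_zpow, hΦdef, Φmap_0, Φmap_1, AE_sq,
          ← map_zpow, ← map_zpow, ← map_mul]
        show (L R S T U u (-s))^t * (L R S T U t (-r))^(-u) = gb R S T U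
        rw [L_zpow, L_zpow, L_mul]
        exact (L_eq R S T U _ _ 0 1 (by ring) (by linear_combination hdet)).trans (L_b R S T U)
      · show (Φ (θ (gc R S T U))).x = gc R S T U
        rw [hθdef, θmap_2, hΦdef, Φmap_2]
        rfl
    intro x
    calc ψ (θ₀ x) = (ψ.comp θ₀) x := rfl
      _ = x := by rw [h]; rfl
  have hinj : Function.Injective θ₀ := by
    intro x y hxy
    have h2 := congrArg ψ hxy
    rwa [hcompose, hcompose] at h2
  -- surjectivity
  set H := θ.range with hHdef
  have hm_img : θ (L R S T U u (-s)) = (ga r s t u)^(2:ℤ) := by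
    rw [hθdef, θmap_L]
    exact (L_eq r s t u _ _ 1 0 (by linear_combination hdet) (by ring)).trans (L_a2 r s t u)
  have hgb : gb r s t u ∈ H := by
    refine ⟨L R S T U t (-r), ?_⟩
    rw [hθdef, θmap_L]
    exact (L_eq r s t u _ _ 0 1 (by ring) (by linear_combination hdet)).trans (L_b r s t u)
  have hga2 : (ga r s t u)^(2:ℤ) ∈ H := ⟨L R S T U u (-s), hm_img⟩
  have hgc : gc r s t u ∈ H := ⟨gc R S T U, θmap_2 r s t u R S T U hdet hR hS hT hU⟩
  -- σ is surjective
  have hσsurj : Function.Surjective σh := by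
    have h0 : ga R S T U ∈ σh.range := ⟨gc R S T U, σmap_2 s u R S T U _ _⟩
    have h2' : gc R S T U ∈ σh.range := by
      refine ⟨(L R S T U u (-s))⁻¹ * ga R S T U * L R S T U u (-s), ?_⟩
      rw [map_mul, map_mul, map_inv, hσdef, σmap_0,
        σ_fix_m r s t u R S T U (hRU_of r s t u R U hR hU)
          (hdet2_of r s t u R S T hdet hR hS hT) hdet hR hS hT hU]
      group
    have h1' : gb R S T U ∈ σh.range := by
      refine ⟨L R S T U T (-R), ?_⟩
      rw [hσdef, σmap_L]
      refine (L_eq R S T U _ _ 0 1 (by ring) ?_).trans (L_b R S T U)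
      have h2 := hdet2_of r s t u R S T hdet hR hS hT
      have h3 := hRU_of r s t u R U hR hU
      linear_combination h2 + (-R)*h3
    intro x
    have hx : x ∈ σh.range := by
      apply PresentedGroup.generated_by
      intro j; fin_cases j
      exacts [h0, h1', h2']
    exact hx
  -- conjugation by a maps H to H
  have hcomp : ((MulAut.conj (ga r s t u)).toMonoidHom).comp θ = θ.comp σh := by
    apply PresentedGroup.ext
    intro i; fin_cases i
    · show (MulAut.conj (ga r s t u)) (θ (ga R S T U)) = θ (σh (ga R S T U))
      rw [hθdef, hσdef, θmap_0, σmap_0, MulAut.conj_apply, map_mul, map_mul, map_inv,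
        θmap_2, ← hθdef, hm_img, zpow_two]
      group
    · show (MulAut.conj (ga r s t u)) (θ (gb R S T U)) = θ (σh (gb R S T U))
      rw [hθdef, hσdef, θmap_1, σmap_1, θmap_L, MulAut.conj_apply]
      have hL : ga r s t u * L r s t u t (-u) * (ga r s t u)⁻¹ = L r s t u t u := by
        simpa using conj_a_L r s t u t (-u)
      rw [hL]
      exact L_eq r s t u t u _ _
        (by linear_combination (-r)*hT + (-t)*hU + (-t)*hdet)
        (by linear_combination s*hT + u*hU + (-u)*hdet)
    · show (MulAut.conj (ga r s t u)) (θ (gc R S T U)) = θ (σh (gc R S T U))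
      rw [hθdef, hσdef, θmap_2, σmap_2, θmap_0, MulAut.conj_apply]
  have hMap : Subgroup.map (MulAut.conj (ga r s t u)).toMonoidHom H = H := by
    rw [hHdef, ← MonoidHom.range_comp, hcomp, MonoidHom.range_comp,
      MonoidHom.range_eq_top.mpr hσsurj, ← MonoidHom.range_eq_map]
  have hanorm : ga r s t u ∈ Subgroup.normalizer (H : Set (SapphireGroup r s t u)) := by
    rw [Subgroup.mem_normalizer_iff]
    intro h
    constructor
    · intro hh
      rw [← hMap]
      exact ⟨h, hh, rfl⟩
    · intro hh
      have h3 : ga r s t u * h * (ga r s t u)⁻¹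
          ∈ Subgroup.map (MulAut.conj (ga r s t u)).toMonoidHom H := hMap.symm ▸ hh
      obtain ⟨k, hk, hk2⟩ := Subgroup.mem_map.mp h3
      have h4 : k = h := (MulAut.conj (ga r s t u)).injective hk2
      rwa [← h4]
  haveI hnormal : H.Normal := by
    rw [← Subgroup.normalizer_eq_top_iff, Subgroup.eq_top_iff']
    intro x
    apply PresentedGroup.generated_by
    intro j; fin_cases j
    exacts [hanorm, Subgroup.le_normalizer hgb, Subgroup.le_normalizer hgc]
  have hHker : ∀ x ∈ H, φ x = 1 := by
    rintro x ⟨y, rfl⟩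
    exact MonoidHom.mem_ker.mp (hker y)
  -- kernel of φ is contained in H
  have hkerH : ∀ g, g ∈ φ.ker → g ∈ H := by
    intro g hg
    set q := QuotientGroup.mk' H with hqdef
    have hq2 : (q (ga r s t u))^(2:ℤ) = 1 := by
      rw [← map_zpow]
      exact (QuotientGroup.eq_one_iff _).mpr hga2
    have hmem : q g ∈ Subgroup.zpowers (q (ga r s t u)) := by
      have hK : g ∈ Subgroup.comap q (Subgroup.zpowers (q (ga r s t u))) := by
        apply PresentedGroup.generated_by
        intro j; fin_cases j
        · exact Subgroup.mem_comap.mpr (Subgroup.mem_zpowers _)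
        · refine Subgroup.mem_comap.mpr ?_
          show q (gb r s t u) ∈ Subgroup.zpowers (q (ga r s t u))
          rw [show q (gb r s t u) = 1 from (QuotientGroup.eq_one_iff _).mpr hgb]
          exact one_mem _
        · refine Subgroup.mem_comap.mpr ?_
          show q (gc r s t u) ∈ Subgroup.zpowers (q (ga r s t u))
          rw [show q (gc r s t u) = 1 from (QuotientGroup.eq_one_iff _).mpr hgc]
          exact one_mem _
      exact Subgroup.mem_comap.mp hK
    obtain ⟨n, hn⟩ := Subgroup.mem_zpowers_iff.mp hmem
    rcases Int.even_or_odd n with ⟨k, hk⟩ | ⟨k, hk⟩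
    · rw [hk, show k + k = 2*k from by ring, zpow_mul, hq2, one_zpow] at hn
      exact (QuotientGroup.eq_one_iff _).mp hn.symm
    · rw [hk, zpow_add, zpow_one, zpow_mul, hq2, one_zpow, one_mul] at hn
      exfalso
      have h5 : q ((ga r s t u)⁻¹ * g) = 1 := by
        rw [map_mul, map_inv, ← hn, inv_mul_cancel]
      have h6 : (ga r s t u)⁻¹ * g ∈ H := (QuotientGroup.eq_one_iff _).mp h5
      have h7 := hHker _ h6
      rw [map_mul, map_inv, show φ (ga r s t u) = Multiplicative.ofAdd (1 : ZMod 2) from ha,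
        MonoidHom.mem_ker.mp hg, mul_one] at h7
      exact absurd h7 (by decide)
  have hsurj : Function.Surjective θ₀ := by
    intro k
    obtain ⟨x, hx⟩ := hkerH k.1 k.2
    exact ⟨x, Subtype.ext hx⟩
  exact ⟨(MulEquiv.ofBijective θ₀ ⟨hinj, hsurj⟩).symm⟩

/-! ### the sign-flip isomorphism and the final statement -/

def fJ (a b c e : ℤ) : Fin 3 → SapphireGroup a b c e := fun i => match i with
  | 0 => ga a b c e
  | 1 => (gb a b c e)⁻¹
  | 2 => gc a b c e

@[simp] lemma fJ_0 (a b c e : ℤ) : fJ a b c e 0 = ga a b c e := rfl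
@[simp] lemma fJ_1 (a b c e : ℤ) : fJ a b c e 1 = (gb a b c e)⁻¹ := rfl
@[simp] lemma fJ_2 (a b c e : ℤ) : fJ a b c e 2 = gc a b c e := rfl

lemma Jobl (a b c e b' e' : ℤ) (hb : b' = -b) (he : e' = -e) :
    ∀ w ∈ sapphireRels a b' c e', FreeGroup.lift (fJ a b c e) w = 1 := by
  subst hb he
  intro w hw
  rcases hw with rfl | rfl | rfl
  · simp only [map_mul, map_inv, FreeGroup.lift_apply_of, fJ_0, fJ_1]
    have h : ga a b c e * (gb a b c e)⁻¹ * (ga a b c e)⁻¹ = gb a b c e := by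
      have h2 := conj_b_zpow a b c e (-1)
      simpa using h2
    rw [h, mul_inv_cancel]
  · simp only [map_mul, map_zpow, map_inv, FreeGroup.lift_apply_of, fJ_0, fJ_1, fJ_2]
    simp only [inv_zpow, ← zpow_neg, neg_neg]
    rw [zpow_neg_two_mul, rel2',
      show (ga a b c e ^ (2:ℤ))^(-a) = L a b c e (-a) 0 from by simp [L],
      show (gb a b c e)^(-b) = L a b c e 0 (-b) from by simp [L], L_mul, L_mul]
    exact L_eq_one a b c e _ _ (by ring) (by ring)
  · simp only [map_mul, map_zpow, map_inv, FreeGroup.lift_apply_of, fJ_0, fJ_1, fJ_2]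
    simp only [inv_zpow, ← zpow_neg, neg_neg]
    rw [zpow_two_mul']
    exact sandwich _ _ _ (L a b c e c e) rfl
      (by rw [rel3', L_mul]; exact L_eq_one a b c e _ _ (by ring) (by ring))

def Jmap (a b c e b' e' : ℤ) (hb : b' = -b) (he : e' = -e) :
    PresentedGroup (sapphireRels a b' c e') →* SapphireGroup a b c e :=
  PresentedGroup.toGroup (Jobl a b c e b' e' hb he)

/-- The sign-flip isomorphism `G(r,s,t,u) ≃ G(r,-s,t,-u)`, `b ↦ b⁻¹`. -/
def Jequiv (r s t u : ℤ) : SapphireGroup r s t u ≃* SapphireGroup r (-s) t (-u) :=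
  MonoidHom.toMulEquiv
    (Jmap r (-s) t (-u) s u (by ring) (by ring))
    (Jmap r s t u (-s) (-u) rfl rfl)
    (by
      apply PresentedGroup.ext
      intro i; fin_cases i
      · show Jmap r s t u (-s) (-u) rfl rfl
          (Jmap r (-s) t (-u) s u (by ring) (by ring) (ga r s t u)) = ga r s t u
        rw [show Jmap r (-s) t (-u) s u (by ring) (by ring) (ga r s t u)
          = ga r (-s) t (-u) from PresentedGroup.toGroup.of _]
        exact PresentedGroup.toGroup.of _
      · show Jmap r s t u (-s) (-u) rfl rfl
          (Jmap r (-s) t (-u) s u (by ring) (by ring) (gb r s t u)) = gb r s t u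
        rw [show Jmap r (-s) t (-u) s u (by ring) (by ring) (gb r s t u)
          = (gb r (-s) t (-u))⁻¹ from PresentedGroup.toGroup.of _, map_inv,
          show Jmap r s t u (-s) (-u) rfl rfl (gb r (-s) t (-u))
          = (gb r s t u)⁻¹ from PresentedGroup.toGroup.of _, inv_inv]
      · show Jmap r s t u (-s) (-u) rfl rfl
          (Jmap r (-s) t (-u) s u (by ring) (by ring) (gc r s t u)) = gc r s t u
        rw [show Jmap r (-s) t (-u) s u (by ring) (by ring) (gc r s t u)
          = gc r (-s) t (-u) from PresentedGroup.toGroup.of _]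
        exact PresentedGroup.toGroup.of _)
    (by
      apply PresentedGroup.ext
      intro i; fin_cases i
      · show Jmap r (-s) t (-u) s u (by ring) (by ring)
          (Jmap r s t u (-s) (-u) rfl rfl (ga r (-s) t (-u))) = ga r (-s) t (-u)
        rw [show Jmap r s t u (-s) (-u) rfl rfl (ga r (-s) t (-u))
          = ga r s t u from PresentedGroup.toGroup.of _]
        exact PresentedGroup.toGroup.of _
      · show Jmap r (-s) t (-u) s u (by ring) (by ring)
          (Jmap r s t u (-s) (-u) rfl rfl (gb r (-s) t (-u))) = gb r (-s) t (-u)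
        rw [show Jmap r s t u (-s) (-u) rfl rfl (gb r (-s) t (-u))
          = (gb r s t u)⁻¹ from PresentedGroup.toGroup.of _, map_inv,
          show Jmap r (-s) t (-u) s u (by ring) (by ring) (gb r s t u)
          = (gb r (-s) t (-u))⁻¹ from PresentedGroup.toGroup.of _, inv_inv]
      · show Jmap r (-s) t (-u) s u (by ring) (by ring)
          (Jmap r s t u (-s) (-u) rfl rfl (gc r (-s) t (-u))) = gc r (-s) t (-u)
        rw [show Jmap r s t u (-s) (-u) rfl rfl (gc r (-s) t (-u))
          = gc r s t u from PresentedGroup.toGroup.of _]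
        exact PresentedGroup.toGroup.of _)

end Main

end SapphireKer

theorem stmt0 (r s t u : ℤ)
    (φ : SapphireGroup r s t u →* Multiplicative (ZMod 2))
    (ha : φ (PresentedGroup.of 0) = Multiplicative.ofAdd (1 : ZMod 2))
    (hb : φ (PresentedGroup.of 1) = Multiplicative.ofAdd (0 : ZMod 2))
    (hc : φ (PresentedGroup.of 2) = Multiplicative.ofAdd (0 : ZMod 2)) :
    (r * u - s * t = 1 →
      Nonempty (φ.ker ≃*
        SapphireGroup (r * u + s * t) (-(2 * r * s)) (2 * t * u) (-(r * u + s * t)))) ∧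
    (r * u - s * t = -1 →
      Nonempty (φ.ker ≃*
        SapphireGroup (-(r * u + s * t)) (2 * r * s) (-(2 * t * u)) (r * u + s * t))) := by
  constructor
  · intro hdet
    exact SapphireKer.main r s t u (r*u+s*t) (-(2*r*s)) (2*t*u) (-(r*u+s*t))
      hdet rfl rfl rfl rfl φ ha hb hc
  · intro hdet
    set J := SapphireKer.Jequiv r s t u with hJdef
    set φ₂ : SapphireGroup r (-s) t (-u) →* Multiplicative (ZMod 2)
      := φ.comp J.symm.toMonoidHom with hφ₂def
    have hJsymm : J.symm.toMonoidHom = SapphireKer.Jmap r s t u (-s) (-u) rfl rfl := rfl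
    have ha2 : φ₂ (PresentedGroup.of 0) = Multiplicative.ofAdd (1 : ZMod 2) := by
      rw [hφ₂def, MonoidHom.comp_apply, hJsymm,
        show SapphireKer.Jmap r s t u (-s) (-u) rfl rfl (PresentedGroup.of 0)
          = SapphireKer.ga r s t u from PresentedGroup.toGroup.of _]
      exact ha
    have hb2 : φ₂ (PresentedGroup.of 1) = Multiplicative.ofAdd (0 : ZMod 2) := by
      rw [hφ₂def, MonoidHom.comp_apply, hJsymm,
        show SapphireKer.Jmap r s t u (-s) (-u) rfl rfl (PresentedGroup.of 1)
          = (SapphireKer.gb r s t u)⁻¹ from PresentedGroup.toGroup.of _, map_inv,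
        show SapphireKer.gb r s t u = (PresentedGroup.of 1 : SapphireGroup r s t u) from rfl, hb]
      decide
    have hc2 : φ₂ (PresentedGroup.of 2) = Multiplicative.ofAdd (0 : ZMod 2) := by
      rw [hφ₂def, MonoidHom.comp_apply, hJsymm,
        show SapphireKer.Jmap r s t u (-s) (-u) rfl rfl (PresentedGroup.of 2)
          = SapphireKer.gc r s t u from PresentedGroup.toGroup.of _]
      exact hc
    obtain ⟨e2⟩ := SapphireKer.main r (-s) t (-u)
      (-(r*u+s*t)) (2*r*s) (-(2*t*u)) (r*u+s*t)
      (by linear_combination -hdet) (by ring) (by ring) (by ring) (by ring)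
      φ₂ ha2 hb2 hc2
    refine ⟨((MulEquiv.subgroupMap J φ.ker).trans (MulEquiv.subgroupCongr ?_)).trans e2⟩
    rw [Subgroup.map_equiv_eq_comap_symm, hφ₂def]
    exact MonoidHom.comap_ker φ J.symm.toMonoidHom
end

section
/- Let r,s,t,u be integers with ru−st=±1 and s even. Then there is a (unique) group homomorphism φ₂ : G(r,s,t,u) → ℤ/2ℤ sending the generators a ↦ 0, b ↦ 1, c ↦ 0, and its kernel is isomorphic, as an abstract group, to G(r, s/2, 2t, u). -/
namespace SapphireAux

variable {H : Type*} [Group H]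

theorem pw_mul {x y : H} (h : Commute x y) (p q p' q' : ℤ) :
    (x ^ p * y ^ q) * (x ^ p' * y ^ q') = x ^ (p + p') * y ^ (q + q') := by
  have h2 : Commute (y ^ q) (x ^ p') := (h.symm.zpow_zpow q p')
  calc (x ^ p * y ^ q) * (x ^ p' * y ^ q') = x ^ p * (y ^ q * x ^ p') * y ^ q' := by group
    _ = x ^ p * (x ^ p' * y ^ q) * y ^ q' := by rw [h2.eq]
    _ = (x ^ p * x ^ p') * (y ^ q * y ^ q') := by group
    _ = x ^ (p + p') * y ^ (q + q') := by rw [← zpow_add, ← zpow_add]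

theorem pw_zpow {x y : H} (h : Commute x y) (p q k : ℤ) :
    (x ^ p * y ^ q) ^ k = x ^ (p * k) * y ^ (q * k) := by
  rw [(h.zpow_zpow p q).mul_zpow, ← zpow_mul, ← zpow_mul]

theorem pw_eq_one {x y : H} {p q : ℤ} (hp : p = 0) (hq : q = 0) : x ^ p * y ^ q = 1 := by
  rw [hp, hq, zpow_zero, zpow_zero, one_mul]

/-- master conjugation formula -/
theorem conj_pw {x y d : H} {r s t u D : ℤ} (hxy : Commute x y)
    (hdX : d * (x ^ t * y ^ u) * d⁻¹ = (x ^ t * y ^ u)⁻¹)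
    (hdY : d * (x ^ r * y ^ s) * d⁻¹ = x ^ r * y ^ s)
    (hdet : r * u - s * t = D) (hD : D * D = 1) (p q : ℤ) :
    d * (x ^ p * y ^ q) * d⁻¹ =
      x ^ ((1 + 2 * s * t * D) * p - 2 * r * t * D * q) *
        y ^ (2 * s * u * D * p - (1 + 2 * s * t * D) * q) := by
  have key : x ^ p * y ^ q =
      (x ^ t * y ^ u) ^ (-(s * D) * p + r * D * q) *
        (x ^ r * y ^ s) ^ (u * D * p - t * D * q) := by
    rw [pw_zpow hxy, pw_zpow hxy, pw_mul hxy]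
    have e1 : t * (-(s * D) * p + r * D * q) + r * (u * D * p - t * D * q) = p := by
      linear_combination p * D * hdet + p * hD
    have e2 : u * (-(s * D) * p + r * D * q) + s * (u * D * p - t * D * q) = q := by
      linear_combination q * D * hdet + q * hD
    rw [e1, e2]
  have hX' : MulAut.conj d (x ^ t * y ^ u) = (x ^ t * y ^ u)⁻¹ := by
    simpa [MulAut.conj_apply, mul_assoc] using hdX
  have hY' : MulAut.conj d (x ^ r * y ^ s) = x ^ r * y ^ s := by
    simpa [MulAut.conj_apply, mul_assoc] using hdY
  have e3 : t * (-(-(s * D) * p + r * D * q)) + r * (u * D * p - t * D * q)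
      = (1 + 2 * s * t * D) * p - 2 * r * t * D * q := by
    linear_combination p * D * hdet + p * hD
  have e4 : u * (-(-(s * D) * p + r * D * q)) + s * (u * D * p - t * D * q)
      = 2 * s * u * D * p - (1 + 2 * s * t * D) * q := by
    linear_combination (-(q * D)) * hdet + (-q) * hD
  calc d * (x ^ p * y ^ q) * d⁻¹ = MulAut.conj d (x ^ p * y ^ q) := by
        simp [MulAut.conj_apply, mul_assoc]
    _ = MulAut.conj d ((x ^ t * y ^ u) ^ (-(s * D) * p + r * D * q) *
          (x ^ r * y ^ s) ^ (u * D * p - t * D * q)) := by rw [← key]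
    _ = (MulAut.conj d (x ^ t * y ^ u)) ^ (-(s * D) * p + r * D * q) *
          (MulAut.conj d (x ^ r * y ^ s)) ^ (u * D * p - t * D * q) := by
        rw [map_mul, map_zpow, map_zpow]
    _ = ((x ^ t * y ^ u)⁻¹) ^ (-(s * D) * p + r * D * q) *
          (x ^ r * y ^ s) ^ (u * D * p - t * D * q) := by rw [hX', hY']
    _ = (x ^ t * y ^ u) ^ (-(-(s * D) * p + r * D * q)) *
          (x ^ r * y ^ s) ^ (u * D * p - t * D * q) := by
        rw [zpow_neg, inv_zpow]
    _ = _ := by rw [pw_zpow hxy, pw_zpow hxy, pw_mul hxy, e3, e4]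

structure SapphirePkg (a b c : H) (r s t u D : ℤ) : Prop where
  comm : Commute (a ^ (2:ℤ)) b
  hab : a * b * a⁻¹ = b⁻¹
  k1 : a * b = b⁻¹ * a
  k2 : a * b⁻¹ = b * a
  hY : c ^ (2:ℤ) = (a ^ (2:ℤ)) ^ r * b ^ s
  conj_c : ∀ p q : ℤ, c * ((a ^ (2:ℤ)) ^ p * b ^ q) * c⁻¹ =
      (a ^ (2:ℤ)) ^ ((1 + 2*s*t*D)*p - 2*r*t*D*q) * b ^ (2*s*u*D*p - (1 + 2*s*t*D)*q)
  conj_ci : ∀ p q : ℤ, c⁻¹ * ((a ^ (2:ℤ)) ^ p * b ^ q) * c =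
      (a ^ (2:ℤ)) ^ ((1 + 2*s*t*D)*p - 2*r*t*D*q) * b ^ (2*s*u*D*p - (1 + 2*s*t*D)*q)

theorem mkPkg {a b c : H} {r s t u D : ℤ} (hdet : r * u - s * t = D) (hD : D * D = 1)
    (h1 : a * b * a⁻¹ * b = 1)
    (h2 : c ^ (2:ℤ) * a ^ (-(2 * r)) * b ^ (-s) = 1)
    (h3 : c * a ^ (2 * t) * b ^ u * c⁻¹ * a ^ (2 * t) * b ^ u = 1) :
    SapphirePkg a b c r s t u D := by
  have hab : a * b * a⁻¹ = b⁻¹ := mul_eq_one_iff_eq_inv.mp h1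
  have hab2 : a * b⁻¹ * a⁻¹ = b := by
    have := congrArg Inv.inv hab
    simpa [mul_inv_rev, mul_assoc] using this
  have k1 : a * b = b⁻¹ * a := by rw [← hab]; group
  have k2 : a * b⁻¹ = b * a := by
    conv_rhs => rw [← hab2]
    group
  have comm : Commute (a ^ (2:ℤ)) b := by
    show a ^ (2:ℤ) * b = b * a ^ (2:ℤ)
    rw [zpow_two]
    calc a * a * b = a * (a * b) := by group
      _ = a * (b⁻¹ * a) := by rw [k1]
      _ = (a * b⁻¹) * a := by group
      _ = (b * a) * a := by rw [k2]
      _ = b * (a * a) := by group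
  have hY : c ^ (2:ℤ) = (a ^ (2:ℤ)) ^ r * b ^ s := by
    have e : c ^ (2:ℤ) = b ^ s * a ^ (2 * r) := by
      calc c ^ (2:ℤ) = c ^ (2:ℤ) * a ^ (-(2*r)) * b ^ (-s) * b ^ s * a ^ (2*r) := by group
        _ = 1 * b ^ s * a ^ (2*r) := by rw [h2]
        _ = b ^ s * a ^ (2*r) := by group
    rw [e, zpow_mul]
    exact ((comm.zpow_zpow r s).eq).symm
  have hX : c * ((a ^ (2:ℤ)) ^ t * b ^ u) * c⁻¹ = ((a ^ (2:ℤ)) ^ t * b ^ u)⁻¹ := by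
    rw [← zpow_mul]
    have h3' : (c * (a ^ (2*t) * b ^ u) * c⁻¹) * (a ^ (2*t) * b ^ u) = 1 := by
      calc (c * (a ^ (2*t) * b ^ u) * c⁻¹) * (a ^ (2*t) * b ^ u)
          = c * a ^ (2*t) * b ^ u * c⁻¹ * a ^ (2*t) * b ^ u := by group
        _ = 1 := h3
    exact mul_eq_one_iff_eq_inv.mp h3'
  have hYc : c * ((a ^ (2:ℤ)) ^ r * b ^ s) * c⁻¹ = (a ^ (2:ℤ)) ^ r * b ^ s := by
    rw [← hY]; group
  have hXi : c⁻¹ * ((a ^ (2:ℤ)) ^ t * b ^ u) * c = ((a ^ (2:ℤ)) ^ t * b ^ u)⁻¹ := by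
    have e1 : (a ^ (2:ℤ)) ^ t * b ^ u = c⁻¹ * ((a ^ (2:ℤ)) ^ t * b ^ u)⁻¹ * c := by
      rw [← hX]; group
    calc c⁻¹ * ((a ^ (2:ℤ)) ^ t * b ^ u) * c
        = (c⁻¹ * ((a ^ (2:ℤ)) ^ t * b ^ u)⁻¹ * c)⁻¹ := by group
      _ = ((a ^ (2:ℤ)) ^ t * b ^ u)⁻¹ := by rw [← e1]
  have hYi : c⁻¹ * ((a ^ (2:ℤ)) ^ r * b ^ s) * c = (a ^ (2:ℤ)) ^ r * b ^ s := by
    rw [← hY]; group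
  exact ⟨comm, hab, k1, k2, hY,
    fun p q => conj_pw comm hX hYc hdet hD p q,
    fun p q => by
      have hh := conj_pw (d := c⁻¹) comm (by rw [inv_inv]; exact hXi)
        (by rw [inv_inv]; exact hYi) hdet hD p q
      rwa [inv_inv] at hh⟩

theorem rel_eq_one {α : Type*} {rels : Set (FreeGroup α)} {w : FreeGroup α} (hw : w ∈ rels) :
    PresentedGroup.mk rels w = 1 :=
  (QuotientGroup.eq_one_iff _).mpr (Subgroup.subset_normalClosure hw)

variable (r s t u : ℤ)

theorem srel1 : (PresentedGroup.of 0 : SapphireGroup r s t u) * .of 1 * (.of 0)⁻¹ * .of 1 = 1 := by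
  have := rel_eq_one (rels := sapphireRels r s t u) (Set.mem_insert _ _)
  simpa [map_mul, map_inv, PresentedGroup.of] using this

theorem srel2 : (PresentedGroup.of 2 : SapphireGroup r s t u) ^ (2:ℤ) *
    (PresentedGroup.of 0) ^ (-(2*r)) * (PresentedGroup.of 1) ^ (-s) = 1 := by
  have := rel_eq_one (rels := sapphireRels r s t u)
    (Set.mem_insert_iff.mpr (Or.inr (Set.mem_insert _ _)))
  simpa [map_mul, map_zpow, PresentedGroup.of] using this

theorem srel3 : (PresentedGroup.of 2 : SapphireGroup r s t u) *
    (PresentedGroup.of 0) ^ (2*t) * (PresentedGroup.of 1) ^ u * (PresentedGroup.of 2)⁻¹ *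
    (PresentedGroup.of 0) ^ (2*t) * (PresentedGroup.of 1) ^ u = 1 := by
  have := rel_eq_one (rels := sapphireRels r s t u)
    (Set.mem_insert_iff.mpr (Or.inr (Set.mem_insert_iff.mpr (Or.inr rfl))))
  simpa [map_mul, map_zpow, map_inv, PresentedGroup.of] using this

theorem sapphirePkg {D : ℤ} (hdet : r * u - s * t = D) (hD : D * D = 1) :
    SapphirePkg (PresentedGroup.of 0 : SapphireGroup r s t u)
      (PresentedGroup.of 1) (PresentedGroup.of 2) r s t u D :=
  mkPkg hdet hD (srel1 r s t u) (srel2 r s t u) (srel3 r s t u)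

/-! The `ℤ/2`-valued character. -/

def fphi : Fin 3 → Multiplicative (ZMod 2) :=
  fun i => if i = 1 then Multiplicative.ofAdd 1 else 1

theorem fphi0 : fphi 0 = 1 := rfl
theorem fphi1 : fphi 1 = Multiplicative.ofAdd 1 := rfl
theorem fphi2 : fphi 2 = 1 := rfl

theorem fphi_rels (s' : ℤ) (hs2 : s = 2 * s') :
    ∀ w ∈ sapphireRels r s t u, FreeGroup.lift fphi w = 1 := by
  intro w hw
  have hpow : ∀ j : ℤ, (Multiplicative.ofAdd (1 : ZMod 2)) ^ (2 * j) = 1 := by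
    intro j
    rw [zpow_mul]
    rw [show (Multiplicative.ofAdd (1 : ZMod 2)) ^ (2:ℤ) = 1 from by decide, one_zpow]
  simp only [sapphireRels, Set.mem_insert_iff, Set.mem_singleton_iff] at hw
  rcases hw with rfl | rfl | rfl
  · simp only [map_mul, map_inv, FreeGroup.lift_apply_of, fphi0, fphi1]
    decide
  · simp only [map_mul, map_zpow, FreeGroup.lift_apply_of, fphi0, fphi1, fphi2, one_zpow, one_mul]
    rw [show (-s : ℤ) = 2 * (-s') from by omega]
    exact hpow _
  · simp only [map_mul, map_zpow, map_inv, FreeGroup.lift_apply_of, fphi0, fphi1, fphi2, one_zpow,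
      one_mul, mul_one, inv_one]
    rw [← zpow_add, show (u + u : ℤ) = 2 * u from by ring]
    exact hpow _

/-! The wreath-type target group. -/

variable (Q : Type*) [Group Q]

def tau : MulAut (Q × Q) := (MulEquiv.prodComm : Q × Q ≃* Q × Q)

theorem tau_apply (p q : Q) : tau Q (p, q) = (q, p) := rfl

theorem tau_sq : tau Q * tau Q = 1 := by ext x <;> rfl

def act : Multiplicative (ZMod 2) →* MulAut (Q × Q) where
  toFun e := if e.toAdd = 1 then tau Q else 1
  map_one' := by rw [if_neg (by decide)]
  map_mul' e d := by
    have hzm : ∀ z : ZMod 2, z = 0 ∨ z = 1 := by decide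
    rcases hzm e.toAdd with he | he <;> rcases hzm d.toAdd with hd | hd <;>
      rw [toAdd_mul, he, hd] <;>
      simp only [show ((0:ZMod 2) + 0 = 0) from by decide, show ((0:ZMod 2) + 1 = 1) from by decide,
        show ((1:ZMod 2) + 0 = 1) from by decide, show ((1:ZMod 2) + 1 = 0) from by decide,
        if_neg (show ¬((0:ZMod 2) = 1) from by decide), if_pos rfl, one_mul, mul_one]
    exact (tau_sq Q).symm

theorem act_eps : act Q (Multiplicative.ofAdd 1) = tau Q := rfl

variable {Q}

def fpsi (a b c : Q) : Fin 3 → Q := fun i => if i = 0 then a else if i = 1 then b * b else c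

theorem fpsi_zero (a b c : Q) : fpsi a b c 0 = a := rfl
theorem fpsi_one (a b c : Q) : fpsi a b c 1 = b * b := rfl
theorem fpsi_two (a b c : Q) : fpsi a b c 2 = c := rfl

def fW (A B C w : Q) : Fin 3 → SemidirectProduct (Q × Q) (Multiplicative (ZMod 2)) (act Q) :=
  fun i => if i = 0 then .inl (A, A * B⁻¹)
    else if i = 1 then ⟨(1, B), Multiplicative.ofAdd 1⟩ else .inl (C, w)

variable (A B C w : Q)

theorem fW_zero : fW A B C w 0 = .inl (A, A * B⁻¹) := rfl
theorem fW_one : fW A B C w 1 = ⟨(1, B), Multiplicative.ofAdd 1⟩ := rfl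
theorem fW_two : fW A B C w 2 = .inl (C, w) := rfl

theorem fW_one_mul : fW A B C w 1 * fW A B C w 1 = .inl (B, B) := by
  rw [fW_one]
  refine SemidirectProduct.ext ?_ ?_
  · show (1, B) * (act Q (Multiplicative.ofAdd 1)) (1, B) = (B, B)
    rw [act_eps, tau_apply, Prod.mk_mul_mk, one_mul, mul_one]
  · show Multiplicative.ofAdd 1 * Multiplicative.ofAdd 1 = 1
    decide

theorem fW_one_even (j : ℤ) : fW A B C w 1 ^ (2 * j) = .inl (B ^ j, B ^ j) := by
  rw [zpow_mul, zpow_two, fW_one_mul, ← map_zpow]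
  rfl

theorem fW_zero_even (habsq : ∀ j : ℤ, (A * B⁻¹) ^ (2*j) = A ^ (2*j)) (j : ℤ) :
    fW A B C w 0 ^ (2 * j) = .inl (A ^ (2*j), A ^ (2*j)) := by
  rw [fW_zero, ← map_zpow]
  have : ((A, A * B⁻¹) : Q × Q) ^ (2*j) = (A ^ (2*j), (A * B⁻¹) ^ (2*j)) := rfl
  rw [this, habsq]

theorem fW_one_odd (k : ℤ) : fW A B C w 1 ^ (2 * k + 1) =
    ⟨(B ^ k, B ^ (k+1)), Multiplicative.ofAdd 1⟩ := by
  rw [zpow_add, zpow_one, fW_one_even]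
  refine SemidirectProduct.ext ?_ ?_
  · show (B ^ k, B ^ k) * (act Q) 1 ((1 : Q), B) = (B ^ k, B ^ (k+1))
    rw [map_one, MulAut.one_apply, Prod.mk_mul_mk, mul_one, ← zpow_add_one]
  · show 1 * Multiplicative.ofAdd 1 = Multiplicative.ofAdd 1
    rw [one_mul]

theorem fW_rels {r s t u s' k : ℤ} (hs2 : s = 2 * s') (hk : u = 2 * k + 1)
    (habsq : ∀ j : ℤ, (A * B⁻¹) ^ (2*j) = A ^ (2*j))
    (hrel1 : A * B * A⁻¹ * B = 1)
    (hrel2 : C ^ (2:ℤ) * A ^ (-(2*r)) * B ^ (-s') = 1)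
    (hw2 : w * w = C ^ (2:ℤ))
    (hidi : C * A ^ (2*t) * B ^ k * w⁻¹ * A ^ (2*t) * B ^ (k+1) = 1)
    (hidii : w * A ^ (2*t) * B ^ (k+1) * C⁻¹ * A ^ (2*t) * B ^ k = 1) :
    ∀ v ∈ sapphireRels r s t u, FreeGroup.lift (fW A B C w) v = 1 := by
  intro v hv
  simp only [sapphireRels, Set.mem_insert_iff, Set.mem_singleton_iff] at hv
  rcases hv with rfl | rfl | rfl
  · simp only [map_mul, map_inv, FreeGroup.lift_apply_of]
    rw [fW_zero, fW_one, ← map_inv]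
    refine SemidirectProduct.ext ?_ ?_
    · simp only [SemidirectProduct.mul_left, SemidirectProduct.mul_right,
        SemidirectProduct.left_inl, SemidirectProduct.right_inl, SemidirectProduct.one_left,
        map_one, MulAut.one_apply, act_eps, one_mul, mul_one, Prod.mk_mul_mk, Prod.inv_mk,
        tau_apply, Prod.mk_eq_one]
      constructor
      · rw [← hrel1]; group
      · group
    · simp only [SemidirectProduct.mul_right, SemidirectProduct.right_inl,
        SemidirectProduct.one_right]
      decide
  · simp only [map_mul, map_zpow, FreeGroup.lift_apply_of]
    rw [fW_two, show (-s : ℤ) = 2 * (-s') from by omega, fW_one_even,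
      show (-(2*r) : ℤ) = 2 * (-r) from by ring, fW_zero_even A B C w habsq,
      ← map_zpow, ← map_mul, ← map_mul]
    have h1 : ((C, w) : Q × Q) ^ (2:ℤ) = (C ^ (2:ℤ), w ^ (2:ℤ)) := rfl
    rw [h1]
    have h2 : ((C ^ (2:ℤ), w ^ (2:ℤ)) : Q × Q) * (A ^ (2*(-r)), A ^ (2*(-r))) *
        (B ^ (-s'), B ^ (-s')) = (1, 1) := by
      simp only [Prod.mk_mul_mk]
      rw [Prod.mk.injEq]
      have e : (2 * (-r) : ℤ) = -(2*r) := by ring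
      constructor <;> rw [e]
      · exact hrel2
      · rw [zpow_two, hw2]; exact hrel2
    rw [h2]
    exact map_one _
  · simp only [map_mul, map_zpow, map_inv, FreeGroup.lift_apply_of]
    rw [fW_two, show (2*t : ℤ) = 2 * t from rfl, fW_zero_even A B C w habsq, hk, fW_one_odd,
      ← map_inv]
    refine SemidirectProduct.ext ?_ ?_
    · simp only [SemidirectProduct.mul_left, SemidirectProduct.mul_right,
        SemidirectProduct.left_inl, SemidirectProduct.right_inl, SemidirectProduct.one_left,
        map_one, MulAut.one_apply, act_eps, one_mul, mul_one, Prod.mk_mul_mk, Prod.inv_mk,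
        tau_apply, Prod.mk_eq_one]
      constructor
      · exact hidi
      · exact hidii
    · simp only [SemidirectProduct.mul_right, SemidirectProduct.right_inl,
        SemidirectProduct.one_right]
      decide

end SapphireAux

set_option maxHeartbeats 2000000 in
open SapphireAux in
theorem stmt1 (r s t u : ℤ) (h : r * u - s * t = 1 ∨ r * u - s * t = -1) (hs : Even s) :
    (∃! φ : SapphireGroup r s t u →* Multiplicative (ZMod 2),
      φ (PresentedGroup.of 0) = Multiplicative.ofAdd (0 : ZMod 2) ∧
      φ (PresentedGroup.of 1) = Multiplicative.ofAdd (1 : ZMod 2) ∧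
      φ (PresentedGroup.of 2) = Multiplicative.ofAdd (0 : ZMod 2)) ∧
    ∀ φ : SapphireGroup r s t u →* Multiplicative (ZMod 2),
      φ (PresentedGroup.of 0) = Multiplicative.ofAdd (0 : ZMod 2) →
      φ (PresentedGroup.of 1) = Multiplicative.ofAdd (1 : ZMod 2) →
      φ (PresentedGroup.of 2) = Multiplicative.ofAdd (0 : ZMod 2) →
      Nonempty (φ.ker ≃* SapphireGroup r (s / 2) (2 * t) u) := by
  classical
  obtain ⟨sh, hsh⟩ := hs
  set s' : ℤ := s / 2 with hs'def
  have hs2 : s = 2 * s' := by omega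
  set D : ℤ := r * u - s * t with hDdef
  have hdet : r * u - s * t = D := rfl
  have hD : D * D = 1 := by rcases h with h1 | h1 <;> rw [h1] <;> norm_num
  have hodd : Odd (r * u) := by
    have hst : s * t = 2 * (s' * t) := by rw [hs2]; ring
    rcases h with h1 | h1
    · exact ⟨s' * t, by linarith⟩
    · exact ⟨s' * t - 1, by linarith⟩
  obtain ⟨k, hk⟩ := (Int.odd_mul.mp hodd).2
  have hdet2 : r * (2 * k + 1) - 2 * s' * t = D := by
    rw [← hk, show (2 * s' : ℤ) = s from by omega]
  have hX2 : (r * (2 * k + 1) - 2 * s' * t) * (r * (2 * k + 1) - 2 * s' * t) = 1 := by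
    rw [hdet2]; exact hD
  have hdet' : r * u - s' * (2 * t) = D := by
    rw [show (s' * (2 * t) : ℤ) = s * t from by rw [hs2]; ring]
  -- the uniqueness-type extensionality
  have hext : ∀ φ₁ φ₂ : SapphireGroup r s t u →* Multiplicative (ZMod 2),
      φ₁ (PresentedGroup.of 0) = φ₂ (PresentedGroup.of 0) →
      φ₁ (PresentedGroup.of 1) = φ₂ (PresentedGroup.of 1) →
      φ₁ (PresentedGroup.of 2) = φ₂ (PresentedGroup.of 2) → φ₁ = φ₂ := by
    intro φ₁ φ₂ h0 h1 h2
    refine PresentedGroup.ext fun i => ?_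
    fin_cases i
    · exact h0
    · exact h1
    · exact h2
  -- the canonical character
  have hφrels := fphi_rels r s t u s' hs2
  set φ₀ : SapphireGroup r s t u →* Multiplicative (ZMod 2) :=
    PresentedGroup.toGroup hφrels with hφ₀def
  have hφ₀0 : φ₀ (PresentedGroup.of 0) = Multiplicative.ofAdd (0 : ZMod 2) := by
    rw [hφ₀def, PresentedGroup.toGroup.of]; rfl
  have hφ₀1 : φ₀ (PresentedGroup.of 1) = Multiplicative.ofAdd (1 : ZMod 2) := by
    rw [hφ₀def, PresentedGroup.toGroup.of]; rfl
  have hφ₀2 : φ₀ (PresentedGroup.of 2) = Multiplicative.ofAdd (0 : ZMod 2) := by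
    rw [hφ₀def, PresentedGroup.toGroup.of]; rfl
  -- THE MAIN PART
  have key : ∀ φ : SapphireGroup r s t u →* Multiplicative (ZMod 2),
      φ (PresentedGroup.of 0) = Multiplicative.ofAdd (0 : ZMod 2) →
      φ (PresentedGroup.of 1) = Multiplicative.ofAdd (1 : ZMod 2) →
      φ (PresentedGroup.of 2) = Multiplicative.ofAdd (0 : ZMod 2) →
      Nonempty (φ.ker ≃* SapphireGroup r s' (2 * t) u) := by
    intro φ hφ0 hφ1 hφ2
    set a : SapphireGroup r s t u := PresentedGroup.of 0 with hadef
    set b : SapphireGroup r s t u := PresentedGroup.of 1 with hbdef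
    set c : SapphireGroup r s t u := PresentedGroup.of 2 with hcdef
    set A : SapphireGroup r s' (2 * t) u := PresentedGroup.of 0 with hAdef
    set B : SapphireGroup r s' (2 * t) u := PresentedGroup.of 1 with hBdef
    set C : SapphireGroup r s' (2 * t) u := PresentedGroup.of 2 with hCdef
    have pkg : SapphirePkg a b c r s t u D := sapphirePkg r s t u hdet hD
    have pkg' : SapphirePkg A B C r s' (2 * t) u D := sapphirePkg r s' (2 * t) u hdet' hD
    have hbbz : ∀ j : ℤ, (b * b) ^ j = b ^ (2 * j) := fun j => by
      rw [← zpow_two, ← zpow_mul]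
    have hBBz : ∀ j : ℤ, (B * B) ^ j = B ^ (2 * j) := fun j => by
      rw [← zpow_two, ← zpow_mul]
    -- the map ψ : G' → G
    have hgrels : ∀ v ∈ sapphireRels r s' (2 * t) u,
        FreeGroup.lift (fpsi a b c) v = 1 := by
      intro v hv
      simp only [sapphireRels, Set.mem_insert_iff, Set.mem_singleton_iff] at hv
      rcases hv with rfl | rfl | rfl
      · simp only [map_mul, map_inv, FreeGroup.lift_apply_of, fpsi_zero, fpsi_one]
        calc a * (b * b) * a⁻¹ * (b * b) = (a * b * a⁻¹) * (a * b * a⁻¹) * (b * b) := by group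
          _ = b⁻¹ * b⁻¹ * (b * b) := by rw [pkg.hab]
          _ = 1 := by group
      · simp only [map_mul, map_zpow, FreeGroup.lift_apply_of, fpsi_zero, fpsi_one, fpsi_two]
        rw [hbbz, show (2 * -s' : ℤ) = -s from by omega]
        exact srel2 r s t u
      · simp only [map_mul, map_zpow, map_inv, FreeGroup.lift_apply_of, fpsi_zero, fpsi_one, fpsi_two]
        rw [hbbz, zpow_mul a 2 (2 * t)]
        calc c * (a ^ (2:ℤ)) ^ (2 * t) * b ^ (2 * u) * c⁻¹ * (a ^ (2:ℤ)) ^ (2 * t) * b ^ (2 * u)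
            = (c * ((a ^ (2:ℤ)) ^ (2 * t) * b ^ (2 * u)) * c⁻¹) *
                ((a ^ (2:ℤ)) ^ (2 * t) * b ^ (2 * u)) := by group
          _ = ((a ^ (2:ℤ)) ^ ((1 + 2*s*t*D)*(2*t) - 2*r*t*D*(2*u)) *
                b ^ (2*s*u*D*(2*t) - (1 + 2*s*t*D)*(2*u))) *
                ((a ^ (2:ℤ)) ^ (2 * t) * b ^ (2 * u)) := by rw [pkg.conj_c (2*t) (2*u)]
          _ = (a ^ (2:ℤ)) ^ (((1 + 2*s*t*D)*(2*t) - 2*r*t*D*(2*u)) + 2 * t) *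
                b ^ ((2*s*u*D*(2*t) - (1 + 2*s*t*D)*(2*u)) + 2 * u) := pw_mul pkg.comm _ _ _ _
          _ = 1 := pw_eq_one
              (by linear_combination (4*t*t*D) * hs2 + (-(4*r*t*D)) * hk +
                (-(8*t*t*s') + 4*r*t + 8*r*t*k) * hdet2 + (-(4*t)) * hX2)
              (by ring)
    set ψ : SapphireGroup r s' (2 * t) u →* SapphireGroup r s t u :=
      PresentedGroup.toGroup hgrels with hψdef
    have hψ0 : ψ (PresentedGroup.of 0) = a := by
      rw [hψdef, PresentedGroup.toGroup.of, fpsi_zero]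
    have hψ1 : ψ (PresentedGroup.of 1) = b * b := by
      rw [hψdef, PresentedGroup.toGroup.of, fpsi_one]
    have hψ2 : ψ (PresentedGroup.of 2) = c := by
      rw [hψdef, PresentedGroup.toGroup.of, fpsi_two]
    -- ψ lands in the kernel of φ
    have hφψ : φ.comp ψ = 1 := by
      refine PresentedGroup.ext fun i => ?_
      fin_cases i
      · show φ (ψ (PresentedGroup.of 0)) = 1
        rw [hψ0, hφ0]; rfl
      · show φ (ψ (PresentedGroup.of 1)) = 1
        rw [hψ1, map_mul, hφ1]; decide
      · show φ (ψ (PresentedGroup.of 2)) = 1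
        rw [hψ2, hφ2]; rfl
    have hkermem : ∀ g2, ψ g2 ∈ φ.ker := fun g2 =>
      MonoidHom.mem_ker.mpr (by simpa using DFunLike.congr_fun hφψ g2)
    -- conjugation facts in G
    have e0 : c⁻¹ * b * c = (a ^ (2:ℤ)) ^ (-(2*r*t*D)) * b ^ (-(1 + 2*s*t*D)) := by
      have h' := pkg.conj_ci 0 1
      rw [zpow_zero, one_mul, zpow_one] at h'
      calc c⁻¹ * b * c
          = (a ^ (2:ℤ)) ^ ((1 + 2*s*t*D)*0 - 2*r*t*D*1) *
            b ^ (2*s*u*D*0 - (1 + 2*s*t*D)*1) := h'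
        _ = (a ^ (2:ℤ)) ^ (-(2*r*t*D)) * b ^ (-(1 + 2*s*t*D)) := by
            rw [show ((1 + 2*s*t*D)*0 - 2*r*t*D*1 : ℤ) = -(2*r*t*D) from by ring,
              show (2*s*u*D*0 - (1 + 2*s*t*D)*1 : ℤ) = -(1 + 2*s*t*D) from by ring]
    have hswapG : ∀ p q : ℤ, b ^ q * (a ^ (2:ℤ)) ^ p = (a ^ (2:ℤ)) ^ p * b ^ q :=
      fun p q => ((pkg.comm.zpow_zpow p q).symm).eq
    -- the subgroup S
    set S : Subgroup (SapphireGroup r s t u) := Subgroup.closure {a, b * b, c} with hSdef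
    have haS : a ∈ S := Subgroup.subset_closure (Set.mem_insert _ _)
    have hbbS : b * b ∈ S :=
      Subgroup.subset_closure (Set.mem_insert_iff.mpr (Or.inr (Set.mem_insert _ _)))
    have hcS : c ∈ S := Subgroup.subset_closure
      (Set.mem_insert_iff.mpr (Or.inr (Set.mem_insert_iff.mpr (Or.inr rfl))))
    have hxS : ∀ p : ℤ, (a ^ (2:ℤ)) ^ p ∈ S := fun p => Subgroup.zpow_mem S (Subgroup.zpow_mem S haS 2) p
    have hbS : ∀ p : ℤ, (b * b) ^ p ∈ S := fun p => Subgroup.zpow_mem S hbbS p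
    have hconjb : ∀ g ∈ S, b * g * b⁻¹ ∈ S := by
      intro g hg
      refine Subgroup.closure_induction ?_ ?_ ?_ ?_ hg
      · intro z hz
        simp only [Set.mem_insert_iff, Set.mem_singleton_iff] at hz
        rcases hz with rfl | rfl | rfl
        · have e : b * a * b⁻¹ = a * (b * b)⁻¹ := by
            conv_lhs => rw [← pkg.k2]
            group
          rw [e]; exact mul_mem haS (inv_mem hbbS)
        · have e : b * (b * b) * b⁻¹ = b * b := by group
          rw [e]; exact hbbS
        · have e : b * c * b⁻¹ =
              c * ((a ^ (2:ℤ)) ^ (-(2*r*t*D)) * (b * b) ^ (-1 - s*t*D)) := by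
            rw [hbbz]
            calc b * c * b⁻¹ = c * (c⁻¹ * b * c) * b⁻¹ := by group
              _ = c * ((a ^ (2:ℤ)) ^ (-(2*r*t*D)) * b ^ (-(1 + 2*s*t*D))) * b⁻¹ := by rw [e0]
              _ = c * ((a ^ (2:ℤ)) ^ (-(2*r*t*D)) * (b ^ (-(1 + 2*s*t*D)) * b⁻¹)) := by group
              _ = c * ((a ^ (2:ℤ)) ^ (-(2*r*t*D)) * b ^ (-(1 + 2*s*t*D) - 1)) := by
                  rw [← zpow_sub_one]
              _ = c * ((a ^ (2:ℤ)) ^ (-(2*r*t*D)) * b ^ (2 * (-1 - s*t*D))) := by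
                  rw [show (-(1 + 2*s*t*D) - 1 : ℤ) = 2 * (-1 - s*t*D) from by ring]
          rw [e]; exact mul_mem hcS (mul_mem (hxS _) (hbS _))
      · have e : b * (1 : SapphireGroup r s t u) * b⁻¹ = 1 := by group
        rw [e]; exact S.one_mem
      · intro x y _ _ hxm hym
        have e : b * (x * y) * b⁻¹ = (b * x * b⁻¹) * (b * y * b⁻¹) := by group
        rw [e]; exact mul_mem hxm hym
      · intro x _ hxm
        have e : b * x⁻¹ * b⁻¹ = (b * x * b⁻¹)⁻¹ := by group
        rw [e]; exact inv_mem hxm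
    have hconjbi : ∀ g ∈ S, b⁻¹ * g * b ∈ S := by
      intro g hg
      refine Subgroup.closure_induction ?_ ?_ ?_ ?_ hg
      · intro z hz
        simp only [Set.mem_insert_iff, Set.mem_singleton_iff] at hz
        rcases hz with rfl | rfl | rfl
        · have e : b⁻¹ * a * b = a * (b * b) := by
            conv_lhs => rw [← pkg.k1]
            group
          rw [e]; exact mul_mem haS hbbS
        · have e : b⁻¹ * (b * b) * b = b * b := by group
          rw [e]; exact hbbS
        · have e : b⁻¹ * c * b =
              c * ((a ^ (2:ℤ)) ^ (2*r*t*D) * (b * b) ^ (1 + s*t*D)) := by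
            calc b⁻¹ * c * b = c * (c⁻¹ * b * c)⁻¹ * b := by group
              _ = c * ((a ^ (2:ℤ)) ^ (-(2*r*t*D)) * b ^ (-(1 + 2*s*t*D)))⁻¹ * b := by rw [e0]
              _ = c * (b ^ (-(-(1 + 2*s*t*D))) * (a ^ (2:ℤ)) ^ (-(-(2*r*t*D)))) * b := by
                  rw [mul_inv_rev, ← zpow_neg, ← zpow_neg]
              _ = c * ((a ^ (2:ℤ)) ^ (-(-(2*r*t*D))) * b ^ (-(-(1 + 2*s*t*D)))) * b := by
                  rw [hswapG]
              _ = c * ((a ^ (2:ℤ)) ^ (2*r*t*D) * (b ^ (1 + 2*s*t*D) * b)) := by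
                  rw [neg_neg, neg_neg]; group
              _ = c * ((a ^ (2:ℤ)) ^ (2*r*t*D) * b ^ ((1 + 2*s*t*D) + 1)) := by
                  rw [← zpow_add_one]
              _ = c * ((a ^ (2:ℤ)) ^ (2*r*t*D) * (b * b) ^ (1 + s*t*D)) := by
                  rw [hbbz, show (2 * (1 + s*t*D) : ℤ) = (1 + 2*s*t*D) + 1 from by ring]
          rw [e]; exact mul_mem hcS (mul_mem (hxS _) (hbS _))
      · have e : b⁻¹ * (1 : SapphireGroup r s t u) * b = 1 := by group
        rw [e]; exact S.one_mem
      · intro x y _ _ hxm hym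
        have e : b⁻¹ * (x * y) * b = (b⁻¹ * x * b) * (b⁻¹ * y * b) := by group
        rw [e]; exact mul_mem hxm hym
      · intro x _ hxm
        have e : b⁻¹ * x⁻¹ * b = (b⁻¹ * x * b)⁻¹ := by group
        rw [e]; exact inv_mem hxm
    -- S together with its b-translate is everything
    set T : Subgroup (SapphireGroup r s t u) :=
      { carrier := {g | g ∈ S ∨ b⁻¹ * g ∈ S}
        one_mem' := Or.inl S.one_mem
        mul_mem' := by
          rintro g g' (hg | hg) (hg' | hg')
          · exact Or.inl (mul_mem hg hg')
          · refine Or.inr ?_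
            have e : b⁻¹ * (g * g') = (b⁻¹ * g * b) * (b⁻¹ * g') := by group
            rw [e]; exact mul_mem (hconjbi g hg) hg'
          · refine Or.inr ?_
            have e : b⁻¹ * (g * g') = (b⁻¹ * g) * g' := by group
            rw [e]; exact mul_mem hg hg'
          · refine Or.inl ?_
            have e : g * g' = (b * (b⁻¹ * g) * b⁻¹) * (b * b) * (b⁻¹ * g') := by group
            rw [e]; exact mul_mem (mul_mem (hconjb _ hg) hbbS) hg'
        inv_mem' := by
          rintro g (hg | hg)
          · exact Or.inl (inv_mem hg)
          · refine Or.inr ?_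
            have e : b⁻¹ * g⁻¹ = (b⁻¹ * (b⁻¹ * g)⁻¹ * b) * (b * b)⁻¹ := by group
            rw [e]; exact mul_mem (hconjbi _ (inv_mem hg)) (inv_mem hbbS) } with hTdef
    have hT : ∀ g, g ∈ T := by
      intro g
      refine PresentedGroup.generated_by _ T (fun j => ?_) g
      fin_cases j
      · exact Or.inl haS
      · refine Or.inr ?_
        show b⁻¹ * b ∈ S
        have e : b⁻¹ * b = 1 := by group
        rw [e]; exact S.one_mem
      · exact Or.inl hcS
    have hSle : S ≤ ψ.range := by
      rw [hSdef]
      refine (Subgroup.closure_le _).mpr ?_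
      rintro z hz
      simp only [Set.mem_insert_iff, Set.mem_singleton_iff] at hz
      rcases hz with rfl | rfl | rfl
      · exact MonoidHom.mem_range.mpr ⟨PresentedGroup.of 0, hψ0⟩
      · exact MonoidHom.mem_range.mpr ⟨PresentedGroup.of 1, hψ1⟩
      · exact MonoidHom.mem_range.mpr ⟨PresentedGroup.of 2, hψ2⟩
    have hSker : S ≤ φ.ker := by
      rw [hSdef]
      refine (Subgroup.closure_le _).mpr ?_
      rintro z hz
      simp only [Set.mem_insert_iff, Set.mem_singleton_iff] at hz
      rcases hz with rfl | rfl | rfl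
      · exact MonoidHom.mem_ker.mpr (by rw [hφ0]; rfl)
      · exact MonoidHom.mem_ker.mpr (by rw [map_mul, hφ1]; decide)
      · exact MonoidHom.mem_ker.mpr (by rw [hφ2]; rfl)
    -- identities in G' needed for θ
    have habsq1 : (A * B⁻¹) * (A * B⁻¹) = A * A := by
      calc (A * B⁻¹) * (A * B⁻¹) = A * (B⁻¹ * A) * B⁻¹ := by group
        _ = A * (A * B) * B⁻¹ := by rw [← pkg'.k1]
        _ = A * A := by group
    have habsq : ∀ j : ℤ, (A * B⁻¹) ^ (2 * j) = A ^ (2 * j) := fun j => by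
      rw [zpow_mul, zpow_mul, zpow_two, zpow_two, habsq1]
    set w' : SapphireGroup r s' (2 * t) u :=
      (A ^ (2:ℤ)) ^ (2*r*t*D) * B ^ (1 + s*t*D) * C with hw'def
    have hswapG' : ∀ p q : ℤ, B ^ q * (A ^ (2:ℤ)) ^ p = (A ^ (2:ℤ)) ^ p * B ^ q :=
      fun p q => ((pkg'.comm.zpow_zpow p q).symm).eq
    have id_w2 : w' * w' = C ^ (2:ℤ) := by
      rw [hw'def]
      calc ((A ^ (2:ℤ)) ^ (2*r*t*D) * B ^ (1 + s*t*D) * C) *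
            ((A ^ (2:ℤ)) ^ (2*r*t*D) * B ^ (1 + s*t*D) * C)
          = ((A ^ (2:ℤ)) ^ (2*r*t*D) * B ^ (1 + s*t*D)) *
              ((C * ((A ^ (2:ℤ)) ^ (2*r*t*D) * B ^ (1 + s*t*D)) * C⁻¹) * C ^ (2:ℤ)) := by group
        _ = ((A ^ (2:ℤ)) ^ (2*r*t*D) * B ^ (1 + s*t*D)) *
              (((A ^ (2:ℤ)) ^ ((1 + 2*s'*(2*t)*D)*(2*r*t*D) - 2*r*(2*t)*D*(1 + s*t*D)) *
                B ^ (2*s'*u*D*(2*r*t*D) - (1 + 2*s'*(2*t)*D)*(1 + s*t*D))) * C ^ (2:ℤ)) := by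
            rw [pkg'.conj_c (2*r*t*D) (1 + s*t*D)]
        _ = (((A ^ (2:ℤ)) ^ (2*r*t*D) * B ^ (1 + s*t*D)) *
              ((A ^ (2:ℤ)) ^ ((1 + 2*s'*(2*t)*D)*(2*r*t*D) - 2*r*(2*t)*D*(1 + s*t*D)) *
                B ^ (2*s'*u*D*(2*r*t*D) - (1 + 2*s'*(2*t)*D)*(1 + s*t*D)))) * C ^ (2:ℤ) := by
            group
        _ = ((A ^ (2:ℤ)) ^ ((2*r*t*D) + ((1 + 2*s'*(2*t)*D)*(2*r*t*D) - 2*r*(2*t)*D*(1 + s*t*D))) *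
              B ^ ((1 + s*t*D) + (2*s'*u*D*(2*r*t*D) - (1 + 2*s'*(2*t)*D)*(1 + s*t*D)))) *
              C ^ (2:ℤ) := by rw [pw_mul pkg'.comm]
        _ = 1 * C ^ (2:ℤ) := by
            rw [pw_eq_one
              (by linear_combination (-(4*r*t*t*D*D)) * hs2)
              (by linear_combination (-(4*t*t*D*D*s')) * hs2 + (4*r*t*D*D*s') * hk +
                (4*t*s' + 8*t*t*D*s'*s' - 16*t*t*t*s'*s'*s' - 4*r*t*D*s' - 8*r*t*D*s'*k +
                  16*r*t*t*s'*s' + 32*r*t*t*s'*s'*k - 4*r*r*t*s' - 16*r*r*t*s'*k -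
                  16*r*r*t*s'*k*k) * hdet2 +
                (-(8*t*t*s'*s') + 4*r*t*s' + 8*r*t*s'*k) * hX2)]
        _ = C ^ (2:ℤ) := one_mul _
    have id_i : C * A ^ (2*t) * B ^ k * w'⁻¹ * A ^ (2*t) * B ^ (k+1) = 1 := by
      rw [hw'def, zpow_mul A 2 t]
      calc C * (A ^ (2:ℤ)) ^ t * B ^ k *
            ((A ^ (2:ℤ)) ^ (2*r*t*D) * B ^ (1 + s*t*D) * C)⁻¹ * (A ^ (2:ℤ)) ^ t * B ^ (k+1)
          = (C * ((A ^ (2:ℤ)) ^ t * B ^ k) * C⁻¹) *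
              (B ^ (-(1 + s*t*D)) * (A ^ (2:ℤ)) ^ (t - 2*r*t*D) * B ^ (k+1)) := by group
        _ = (C * ((A ^ (2:ℤ)) ^ t * B ^ k) * C⁻¹) *
              ((A ^ (2:ℤ)) ^ (t - 2*r*t*D) * B ^ (-(1 + s*t*D)) * B ^ (k+1)) := by
            rw [hswapG' (t - 2*r*t*D) (-(1 + s*t*D))]
        _ = (C * ((A ^ (2:ℤ)) ^ t * B ^ k) * C⁻¹) *
              ((A ^ (2:ℤ)) ^ (t - 2*r*t*D) * B ^ (-(1 + s*t*D) + (k+1))) := by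
            rw [mul_assoc ((A ^ (2:ℤ)) ^ (t - 2*r*t*D)), ← zpow_add]
        _ = ((A ^ (2:ℤ)) ^ ((1 + 2*s'*(2*t)*D)*t - 2*r*(2*t)*D*k) *
              B ^ (2*s'*u*D*t - (1 + 2*s'*(2*t)*D)*k)) *
              ((A ^ (2:ℤ)) ^ (t - 2*r*t*D) * B ^ (-(1 + s*t*D) + (k+1))) := by
            rw [pkg'.conj_c t k]
        _ = (A ^ (2:ℤ)) ^ (((1 + 2*s'*(2*t)*D)*t - 2*r*(2*t)*D*k) + (t - 2*r*t*D)) *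
              B ^ ((2*s'*u*D*t - (1 + 2*s'*(2*t)*D)*k) + (-(1 + s*t*D) + (k+1))) := by
            rw [pw_mul pkg'.comm]
        _ = 1 := pw_eq_one
            (by linear_combination (-(4*t*t*s') + 2*r*t + 4*r*t*k) * hdet2 + (-(2*t)) * hX2)
            (by linear_combination (-(t*D)) * hs2 + (2*t*D*s') * hk)
    have id_ii : w' * A ^ (2*t) * B ^ (k+1) * C⁻¹ * A ^ (2*t) * B ^ k = 1 := by
      rw [hw'def, zpow_mul A 2 t]
      calc (A ^ (2:ℤ)) ^ (2*r*t*D) * B ^ (1 + s*t*D) * C * (A ^ (2:ℤ)) ^ t * B ^ (k+1) * C⁻¹ *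
            (A ^ (2:ℤ)) ^ t * B ^ k
          = ((A ^ (2:ℤ)) ^ (2*r*t*D) * B ^ (1 + s*t*D)) *
              ((C * ((A ^ (2:ℤ)) ^ t * B ^ (k+1)) * C⁻¹) * ((A ^ (2:ℤ)) ^ t * B ^ k)) := by group
        _ = ((A ^ (2:ℤ)) ^ (2*r*t*D) * B ^ (1 + s*t*D)) *
              (((A ^ (2:ℤ)) ^ ((1 + 2*s'*(2*t)*D)*t - 2*r*(2*t)*D*(k+1)) *
                B ^ (2*s'*u*D*t - (1 + 2*s'*(2*t)*D)*(k+1))) * ((A ^ (2:ℤ)) ^ t * B ^ k)) := by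
            rw [pkg'.conj_c t (k+1)]
        _ = ((A ^ (2:ℤ)) ^ (2*r*t*D) * B ^ (1 + s*t*D)) *
              ((A ^ (2:ℤ)) ^ (((1 + 2*s'*(2*t)*D)*t - 2*r*(2*t)*D*(k+1)) + t) *
                B ^ ((2*s'*u*D*t - (1 + 2*s'*(2*t)*D)*(k+1)) + k)) := by
            rw [pw_mul pkg'.comm]
        _ = (A ^ (2:ℤ)) ^ ((2*r*t*D) + (((1 + 2*s'*(2*t)*D)*t - 2*r*(2*t)*D*(k+1)) + t)) *
              B ^ ((1 + s*t*D) + ((2*s'*u*D*t - (1 + 2*s'*(2*t)*D)*(k+1)) + k)) := by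
            rw [pw_mul pkg'.comm]
        _ = 1 := pw_eq_one
            (by linear_combination (-(4*t*t*s') + 2*r*t + 4*r*t*k) * hdet2 + (-(2*t)) * hX2)
            (by linear_combination (t*D) * hs2 + (2*t*D*s') * hk)
    -- the homomorphism θ : G → (G' × G') ⋊ ℤ/2
    have hWrels := fW_rels A B C w' hs2 hk habsq (srel1 r s' (2*t) u) (srel2 r s' (2*t) u)
      id_w2 id_i id_ii
    set θ : SapphireGroup r s t u →*
        SemidirectProduct ((SapphireGroup r s' (2*t) u) × (SapphireGroup r s' (2*t) u))
          (Multiplicative (ZMod 2)) (act (SapphireGroup r s' (2*t) u)) :=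
      PresentedGroup.toGroup hWrels with hθdef
    have hθ : ∀ i : Fin 3, θ (PresentedGroup.of i) = fW A B C w' i := fun i => by
      rw [hθdef]; exact PresentedGroup.toGroup.of hWrels
    have hrc : (SemidirectProduct.rightHom).comp θ = φ := by
      refine PresentedGroup.ext fun i => ?_
      fin_cases i
      · show SemidirectProduct.rightHom (θ (PresentedGroup.of 0)) = φ (PresentedGroup.of 0)
        rw [hθ 0, fW_zero, SemidirectProduct.rightHom_inl, hφ0]; rfl
      · show SemidirectProduct.rightHom (θ (PresentedGroup.of 1)) = φ (PresentedGroup.of 1)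
        rw [hθ 1, fW_one, hφ1]; rfl
      · show SemidirectProduct.rightHom (θ (PresentedGroup.of 2)) = φ (PresentedGroup.of 2)
        rw [hθ 2, fW_two, SemidirectProduct.rightHom_inl, hφ2]; rfl
    have hright : ∀ g, (θ g).right = φ g := fun g => DFunLike.congr_fun hrc g
    -- the retraction ρ : ker φ → G'
    set ρ : φ.ker →* SapphireGroup r s' (2*t) u :=
      { toFun := fun z => ((θ (z : SapphireGroup r s t u)).left).1
        map_one' := by
          show ((θ ((1 : φ.ker) : SapphireGroup r s t u)).left).1 = 1
          rw [OneMemClass.coe_one, map_one]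
          rfl
        map_mul' := fun z₁ z₂ => by
          have h1 : (θ (z₁ : SapphireGroup r s t u)).right = 1 := by
            rw [hright]; exact MonoidHom.mem_ker.mp z₁.2
          show ((θ (((z₁ * z₂ : φ.ker)) : SapphireGroup r s t u)).left).1 = _
          rw [show (((z₁ * z₂ : φ.ker)) : SapphireGroup r s t u) =
            (z₁ : SapphireGroup r s t u) * (z₂ : SapphireGroup r s t u) from rfl]
          rw [map_mul, SemidirectProduct.mul_left, h1, map_one, MulAut.one_apply, Prod.fst_mul]
        } with hρdef
    set ψK : SapphireGroup r s' (2*t) u →* φ.ker :=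
      ψ.codRestrict φ.ker hkermem with hψKdef
    have hρψ : ∀ g2, ρ (ψK g2) = g2 := by
      have hcmp : ρ.comp ψK = MonoidHom.id _ := by
        refine PresentedGroup.ext fun i => ?_
        fin_cases i
        · show ((θ (ψ (PresentedGroup.of 0))).left).1 = PresentedGroup.of 0
          rw [hψ0, hθ 0, fW_zero]
          rfl
        · show ((θ (ψ (PresentedGroup.of 1))).left).1 = PresentedGroup.of 1
          rw [hψ1, map_mul, hθ 1, fW_one_mul A B C w']
          rfl
        · show ((θ (ψ (PresentedGroup.of 2))).left).1 = PresentedGroup.of 2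
          rw [hψ2, hθ 2, fW_two]
          rfl
      exact fun g2 => DFunLike.congr_fun hcmp g2
    have hinj : Function.Injective ψK := Function.LeftInverse.injective hρψ
    have hsurj : Function.Surjective ψK := by
      rintro ⟨z, hz⟩
      rcases hT z with hzS | hzS
      · obtain ⟨g2, hg2⟩ := MonoidHom.mem_range.mp (hSle hzS)
        exact ⟨g2, Subtype.ext hg2⟩
      · exfalso
        have h1 : φ (b⁻¹ * z) = 1 := MonoidHom.mem_ker.mp (hSker hzS)
        have h2 : φ z = Multiplicative.ofAdd 1 := by
          have e : z = b * (b⁻¹ * z) := by group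
          rw [e, map_mul, hφ1, h1, mul_one]
        rw [MonoidHom.mem_ker.mp hz] at h2
        exact absurd h2 (by decide)
    exact ⟨(MulEquiv.ofBijective ψK ⟨hinj, hsurj⟩).symm⟩
  refine ⟨⟨φ₀, ⟨hφ₀0, hφ₀1, hφ₀2⟩, fun φ' hφ' => hext φ' φ₀
      (by rw [hφ'.1, hφ₀0]) (by rw [hφ'.2.1, hφ₀1]) (by rw [hφ'.2.2, hφ₀2])⟩, key⟩
end

section
/- Let r,s,t,u be integers with ru−st=1 and let φ₃ : G(r,s,t,u) → ℤ/2ℤ be the (unique) group homomorphism sending the generators a ↦ 0, b ↦ 0, c ↦ 1 (it exists since each relator has even exponent sum in c). Then the kernel of φ₃ is isomorphic, as an abstract group, to G(ru+st, 2su, −2rt, −(ru+st)). If instead ru−st=−1, the kernel of φ₃ is isomorphic to G(−(ru+st), −2su, 2rt, ru+st). -/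
section KleinCalc
variable {X : Type*} [Group X]

/-- `a^(2i) * b^j`. -/
def KP (a b : X) (i j : ℤ) : X := a ^ (2*i) * b ^ j

variable {a b c : X}

theorem KP_congr {i j i' j' : ℤ} (hi : i = i') (hj : j = j') :
    KP a b i j = KP a b i' j' := by rw [hi, hj]

theorem klein_conj_zpow (h : a * b * a⁻¹ = b⁻¹) (j : ℤ) : a * b ^ j * a⁻¹ = b ^ (-j) := by
  rw [← conj_zpow, h, inv_zpow']

theorem klein_swap (h : a * b * a⁻¹ = b⁻¹) (j : ℤ) : b ^ j * a = a * b ^ (-j) := by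
  have := klein_conj_zpow h (-j)
  rw [neg_neg] at this
  calc b ^ j * a = (a * b ^ (-j) * a⁻¹) * a := by rw [this]
  _ = a * b ^ (-j) := by group

theorem klein_comm (h : a * b * a⁻¹ = b⁻¹) : Commute (a ^ (2:ℤ)) b := by
  have h2 : a ^ (2:ℤ) = a * a := by
    rw [show (2:ℤ) = 1 + 1 from rfl, zpow_add, zpow_one]
  have h3 : a ^ (2:ℤ) * b * (a ^ (2:ℤ))⁻¹ = b := by
    rw [h2]
    calc a * a * b * (a * a)⁻¹ = a * (a * b * a⁻¹) * a⁻¹ := by group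
    _ = a * b⁻¹ * a⁻¹ := by rw [h]
    _ = (a * b * a⁻¹)⁻¹ := by group
    _ = b := by rw [h]; group
  calc a ^ (2:ℤ) * b = (a ^ (2:ℤ) * b * (a ^ (2:ℤ))⁻¹) * a ^ (2:ℤ) := by group
  _ = b * a ^ (2:ℤ) := by rw [h3]

theorem klein_commA (h : a * b * a⁻¹ = b⁻¹) (i j : ℤ) :
    Commute (a ^ (2*i)) (b ^ j) := by
  have := ((klein_comm h).zpow_left i).zpow_right j
  rwa [← zpow_mul] at this

theorem klein_comm' (h : a * b * a⁻¹ = b⁻¹) (i j : ℤ) :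
    b ^ j * a ^ (2*i) = a ^ (2*i) * b ^ j := (klein_commA h i j).symm.eq

theorem KP_mul (h : a * b * a⁻¹ = b⁻¹) (i j k l : ℤ) :
    KP a b i j * KP a b k l = KP a b (i+k) (j+l) := by
  unfold KP
  calc a ^ (2*i) * b ^ j * (a ^ (2*k) * b ^ l)
      = a ^ (2*i) * (b ^ j * a ^ (2*k)) * b ^ l := by group
  _ = a ^ (2*i) * (a ^ (2*k) * b ^ j) * b ^ l := by rw [klein_comm' h]
  _ = (a ^ (2*i) * a ^ (2*k)) * (b ^ j * b ^ l) := by group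
  _ = a ^ (2*i + 2*k) * b ^ (j + l) := by rw [← zpow_add, ← zpow_add]
  _ = a ^ (2*(i+k)) * b ^ (j+l) := by ring_nf

theorem KP_zero : KP a b 0 0 = 1 := by simp [KP]

theorem KP_inv (h : a * b * a⁻¹ = b⁻¹) (i j : ℤ) : (KP a b i j)⁻¹ = KP a b (-i) (-j) := by
  apply inv_eq_of_mul_eq_one_right
  rw [KP_mul h]
  simpa using KP_zero

theorem KP_zpow (h : a * b * a⁻¹ = b⁻¹) (i j n : ℤ) :
    (KP a b i j) ^ n = KP a b (n*i) (n*j) := by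
  induction n using Int.induction_on with
  | zero => simpa using KP_zero.symm
  | succ n ih =>
      rw [zpow_add_one, ih, KP_mul h]
      exact KP_congr (by ring) (by ring)
  | pred n ih =>
      rw [zpow_sub_one, ih, KP_inv h, KP_mul h]
      exact KP_congr (by ring) (by ring)

theorem klein_z_conj (h : a * b * a⁻¹ = b⁻¹) (r s : ℤ) :
    KP a b r s * a * (KP a b r s)⁻¹ = a * b ^ (-(2*s)) := by
  have hb2 : b ^ s * a * b ^ (-s) = a * b ^ (-(2*s)) := by
    rw [klein_swap h, mul_assoc, ← zpow_add]
    congr 1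
    ring
  have hca : Commute (a ^ (2*r : ℤ)) a := (Commute.refl a).zpow_left _
  have hcm : Commute (a ^ (2*r : ℤ)) (a * b ^ (-(2*s))) :=
    hca.mul_right (klein_commA h r _)
  calc KP a b r s * a * (KP a b r s)⁻¹
      = a ^ (2*r) * (b ^ s * a * b ^ (-s)) * (a ^ (2*r))⁻¹ := by
        unfold KP; rw [zpow_neg]; group
  _ = a ^ (2*r) * (a * b ^ (-(2*s))) * (a ^ (2*r))⁻¹ := by rw [hb2]
  _ = a * b ^ (-(2*s)) := by rw [hcm.eq]; group

end KleinCalc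

theorem mk_rel_eq_one {α : Type*} {rels : Set (FreeGroup α)} {ρ : FreeGroup α} (h : ρ ∈ rels) :
    PresentedGroup.mk rels ρ = 1 :=
  (QuotientGroup.eq_one_iff _).mpr (Subgroup.subset_normalClosure h)

theorem conjP {X : Type*} [Group X] {a b c : X} {r s t u : ℤ}
    (h1 : a * b * a⁻¹ = b⁻¹) (h2 : c ^ (2:ℤ) = KP a b r s)
    (h3 : c * KP a b t u * c⁻¹ = (KP a b t u)⁻¹) (α β : ℤ) :
    c * KP a b (α*r+β*t) (α*s+β*u) * c⁻¹ = KP a b (α*r-β*t) (α*s-β*u) := by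
  have hrs : c * KP a b r s * c⁻¹ = KP a b r s := by rw [← h2]; group
  have hsplit : KP a b (α*r+β*t) (α*s+β*u) = (KP a b r s) ^ α * (KP a b t u) ^ β := by
    rw [KP_zpow h1, KP_zpow h1, KP_mul h1]
  rw [hsplit]
  have hconj : c * ((KP a b r s) ^ α * (KP a b t u) ^ β) * c⁻¹ =
      (c * KP a b r s * c⁻¹) ^ α * (c * KP a b t u * c⁻¹) ^ β := by
    rw [conj_zpow, conj_zpow]; group
  rw [hconj, hrs, h3, inv_zpow', KP_zpow h1, KP_zpow h1, KP_mul h1]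
  exact KP_congr (by ring) (by ring)

section RawRel
variable {X : Type*} [Group X] {a b c : X} {r s t u : ℤ}

theorem raw_h1 (h : a * b * a⁻¹ * b = 1) : a * b * a⁻¹ = b⁻¹ :=
  eq_inv_of_mul_eq_one_left h

theorem raw_h1' (h : a * b * a⁻¹ = b⁻¹) : a * b * a⁻¹ * b = 1 := by rw [h]; group

theorem raw_h2 (h1 : a * b * a⁻¹ = b⁻¹)
    (h : c ^ (2:ℤ) * a ^ (-(2*r)) * b ^ (-s) = 1) : c ^ (2:ℤ) = KP a b r s := by
  rw [mul_assoc] at h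
  have h' := eq_inv_of_mul_eq_one_left h
  rw [mul_inv_rev, ← zpow_neg, ← zpow_neg, neg_neg, neg_neg] at h'
  rw [h', show ((2*r : ℤ)) = 2*r from rfl, klein_comm' h1 r s]
  rfl

theorem raw_h2' (h1 : a * b * a⁻¹ = b⁻¹)
    (h : c ^ (2:ℤ) = KP a b r s) : c ^ (2:ℤ) * a ^ (-(2*r)) * b ^ (-s) = 1 := by
  rw [show (-(2*r) : ℤ) = 2*(-r) by ring, mul_assoc, h,
    show a ^ (2 * (-r)) * b ^ (-s) = KP a b (-r) (-s) from rfl, KP_mul h1,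
    KP_congr (show (r + -r : ℤ) = 0 by ring) (show (s + -s : ℤ) = 0 by ring)]
  exact KP_zero

theorem raw_h3 (h : c * a ^ (2*t) * b ^ u * c⁻¹ * a ^ (2*t) * b ^ u = 1) :
    c * KP a b t u * c⁻¹ = (KP a b t u)⁻¹ := by
  have e : c * KP a b t u * c⁻¹ * KP a b t u =
      c * a ^ (2*t) * b ^ u * c⁻¹ * a ^ (2*t) * b ^ u := by unfold KP; group
  exact eq_inv_of_mul_eq_one_left (e.trans h)

theorem raw_h3' (h : c * KP a b t u * c⁻¹ = (KP a b t u)⁻¹) :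
    c * a ^ (2*t) * b ^ u * c⁻¹ * a ^ (2*t) * b ^ u = 1 := by
  have e : c * KP a b t u * c⁻¹ * KP a b t u =
      c * a ^ (2*t) * b ^ u * c⁻¹ * a ^ (2*t) * b ^ u := by unfold KP; group
  rw [← e, h]; group

end RawRel

section SapRels
variable (r s t u : ℤ)

theorem sap_mem1 : (FreeGroup.of 0 * FreeGroup.of 1 * (FreeGroup.of 0)⁻¹ * FreeGroup.of 1)
    ∈ sapphireRels r s t u := Set.mem_insert _ _

theorem sap_mem2 : (FreeGroup.of 2 ^ (2:ℤ) * FreeGroup.of 0 ^ (-(2*r)) * FreeGroup.of 1 ^ (-s))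
    ∈ sapphireRels r s t u := Set.mem_insert_iff.mpr (Or.inr (Set.mem_insert _ _))

theorem sap_mem3 : (FreeGroup.of 2 * FreeGroup.of 0 ^ (2*t) * FreeGroup.of 1 ^ u *
    (FreeGroup.of 2)⁻¹ * FreeGroup.of 0 ^ (2*t) * FreeGroup.of 1 ^ u) ∈ sapphireRels r s t u :=
  Set.mem_insert_iff.mpr (Or.inr (Set.mem_insert_iff.mpr (Or.inr rfl)))

theorem sap_h1 : (PresentedGroup.of 0 : SapphireGroup r s t u) * .of 1 * (.of 0)⁻¹ = (.of 1)⁻¹ := by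
  have h := mk_rel_eq_one (sap_mem1 r s t u)
  simp only [map_mul, map_inv, map_zpow] at h
  exact raw_h1 h

theorem sap_h2 : (PresentedGroup.of 2 : SapphireGroup r s t u) ^ (2:ℤ) =
    KP (.of 0) (.of 1) r s := by
  have h := mk_rel_eq_one (sap_mem2 r s t u)
  simp only [map_mul, map_inv, map_zpow] at h
  exact raw_h2 (sap_h1 r s t u) h

theorem sap_h3 : (PresentedGroup.of 2 : SapphireGroup r s t u) *
    KP (.of 0) (.of 1) t u * (.of 2)⁻¹ = (KP (.of 0) (.of 1) t u)⁻¹ := by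
  have h := mk_rel_eq_one (sap_mem3 r s t u)
  simp only [map_mul, map_inv, map_zpow] at h
  exact raw_h3 h

variable {X : Type*} [Group X] {f : Fin 3 → X}

theorem sap_lift (h1 : f 0 * f 1 * (f 0)⁻¹ = (f 1)⁻¹)
    (h2 : (f 2) ^ (2:ℤ) = KP (f 0) (f 1) r s)
    (h3 : f 2 * KP (f 0) (f 1) t u * (f 2)⁻¹ = (KP (f 0) (f 1) t u)⁻¹) :
    ∀ ρ ∈ sapphireRels r s t u, FreeGroup.lift f ρ = 1 := by
  intro ρ hρ
  simp only [sapphireRels, Set.mem_insert_iff, Set.mem_singleton_iff] at hρ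
  rcases hρ with rfl | rfl | rfl
  · simp only [map_mul, map_inv, map_zpow, FreeGroup.lift_apply_of]
    exact raw_h1' h1
  · simp only [map_mul, map_inv, map_zpow, FreeGroup.lift_apply_of]
    exact raw_h2' h1 h2
  · simp only [map_mul, map_inv, map_zpow, FreeGroup.lift_apply_of]
    exact raw_h3' h3

end SapRels

/-- Relators for the extension presentation: generators `a', b', c'` of the target sapphire
group together with `d` mapping to the original generator `c`. -/
def eRels (r s r' s' t' u' : ℤ) : Set (FreeGroup (Fin 4)) :=
  { FreeGroup.of 0 * FreeGroup.of 1 * (FreeGroup.of 0)⁻¹ * FreeGroup.of 1,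
    FreeGroup.of 2 ^ (2:ℤ) * FreeGroup.of 0 ^ (-(2*r')) * FreeGroup.of 1 ^ (-s'),
    FreeGroup.of 2 * FreeGroup.of 0 ^ (2*t') * FreeGroup.of 1 ^ u' * (FreeGroup.of 2)⁻¹ *
      FreeGroup.of 0 ^ (2*t') * FreeGroup.of 1 ^ u',
    FreeGroup.of 3 * FreeGroup.of 0 * (FreeGroup.of 3)⁻¹ * (FreeGroup.of 2)⁻¹,
    FreeGroup.of 3 * FreeGroup.of 1 * (FreeGroup.of 3)⁻¹ *
      (FreeGroup.of 0 ^ (2*t') * FreeGroup.of 1 ^ u')⁻¹,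
    FreeGroup.of 3 * FreeGroup.of 2 * (FreeGroup.of 3)⁻¹ *
      (FreeGroup.of 0 * FreeGroup.of 1 ^ (-(2*s)))⁻¹,
    FreeGroup.of 3 ^ (2:ℤ) * (FreeGroup.of 0 ^ (2*r) * FreeGroup.of 1 ^ s)⁻¹ }

abbrev EG (r s r' s' t' u' : ℤ) := PresentedGroup (eRels r s r' s' t' u')

section ERels
variable (r s r' s' t' u' : ℤ)

local notation "eA" => (PresentedGroup.of (rels := eRels r s r' s' t' u') 0)
local notation "eB" => (PresentedGroup.of (rels := eRels r s r' s' t' u') 1)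
local notation "eC" => (PresentedGroup.of (rels := eRels r s r' s' t' u') 2)
local notation "eD" => (PresentedGroup.of (rels := eRels r s r' s' t' u') 3)

theorem emem1 : (FreeGroup.of 0 * FreeGroup.of 1 * (FreeGroup.of 0)⁻¹ * FreeGroup.of 1)
    ∈ eRels r s r' s' t' u' := Set.mem_insert _ _

theorem emem2 : (FreeGroup.of 2 ^ (2:ℤ) * FreeGroup.of 0 ^ (-(2*r')) * FreeGroup.of 1 ^ (-s'))
    ∈ eRels r s r' s' t' u' := Set.mem_insert_iff.mpr (Or.inr (Set.mem_insert _ _))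

theorem emem3 : (FreeGroup.of 2 * FreeGroup.of 0 ^ (2*t') * FreeGroup.of 1 ^ u' *
    (FreeGroup.of 2)⁻¹ * FreeGroup.of 0 ^ (2*t') * FreeGroup.of 1 ^ u')
    ∈ eRels r s r' s' t' u' :=
  Set.mem_insert_iff.mpr (Or.inr (Set.mem_insert_iff.mpr (Or.inr (Set.mem_insert _ _))))

theorem emem4 : (FreeGroup.of 3 * FreeGroup.of 0 * (FreeGroup.of 3)⁻¹ * (FreeGroup.of 2)⁻¹)
    ∈ eRels r s r' s' t' u' :=
  Set.mem_insert_iff.mpr (Or.inr (Set.mem_insert_iff.mpr (Or.inr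
    (Set.mem_insert_iff.mpr (Or.inr (Set.mem_insert _ _))))))

theorem emem5 : (FreeGroup.of 3 * FreeGroup.of 1 * (FreeGroup.of 3)⁻¹ *
    (FreeGroup.of 0 ^ (2*t') * FreeGroup.of 1 ^ u')⁻¹) ∈ eRels r s r' s' t' u' :=
  Set.mem_insert_iff.mpr (Or.inr (Set.mem_insert_iff.mpr (Or.inr
    (Set.mem_insert_iff.mpr (Or.inr (Set.mem_insert_iff.mpr (Or.inr
      (Set.mem_insert _ _))))))))

theorem emem6 : (FreeGroup.of 3 * FreeGroup.of 2 * (FreeGroup.of 3)⁻¹ *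
    (FreeGroup.of 0 * FreeGroup.of 1 ^ (-(2*s)))⁻¹) ∈ eRels r s r' s' t' u' :=
  Set.mem_insert_iff.mpr (Or.inr (Set.mem_insert_iff.mpr (Or.inr
    (Set.mem_insert_iff.mpr (Or.inr (Set.mem_insert_iff.mpr (Or.inr
      (Set.mem_insert_iff.mpr (Or.inr (Set.mem_insert _ _))))))))))

theorem emem7 : (FreeGroup.of 3 ^ (2:ℤ) * (FreeGroup.of 0 ^ (2*r) * FreeGroup.of 1 ^ s)⁻¹)
    ∈ eRels r s r' s' t' u' :=
  Set.mem_insert_iff.mpr (Or.inr (Set.mem_insert_iff.mpr (Or.inr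
    (Set.mem_insert_iff.mpr (Or.inr (Set.mem_insert_iff.mpr (Or.inr
      (Set.mem_insert_iff.mpr (Or.inr (Set.mem_insert_iff.mpr (Or.inr rfl)))))))))))

theorem eh1 : eA * eB * eA⁻¹ = eB⁻¹ := by
  have h := mk_rel_eq_one (emem1 r s r' s' t' u')
  simp only [map_mul, map_inv, map_zpow] at h
  exact raw_h1 h

theorem eh2 : eC ^ (2:ℤ) = KP eA eB r' s' := by
  have h := mk_rel_eq_one (emem2 r s r' s' t' u')
  simp only [map_mul, map_inv, map_zpow] at h
  exact raw_h2 (eh1 r s r' s' t' u') h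

theorem eh3 : eC * KP eA eB t' u' * eC⁻¹ = (KP eA eB t' u')⁻¹ := by
  have h := mk_rel_eq_one (emem3 r s r' s' t' u')
  simp only [map_mul, map_inv, map_zpow] at h
  exact raw_h3 h

theorem eh4 : eD * eA * eD⁻¹ = eC := by
  have h := mk_rel_eq_one (emem4 r s r' s' t' u')
  simp only [map_mul, map_inv, map_zpow] at h
  exact mul_inv_eq_one.mp h

theorem eh5 : eD * eB * eD⁻¹ = KP eA eB t' u' := by
  have h := mk_rel_eq_one (emem5 r s r' s' t' u')
  simp only [map_mul, map_inv, map_zpow] at h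
  exact mul_inv_eq_one.mp h

theorem eh6 : eD * eC * eD⁻¹ = eA * eB ^ (-(2*s)) := by
  have h := mk_rel_eq_one (emem6 r s r' s' t' u')
  simp only [map_mul, map_inv, map_zpow] at h
  exact mul_inv_eq_one.mp h

theorem eh7 : eD ^ (2:ℤ) = KP eA eB r s := by
  have h := mk_rel_eq_one (emem7 r s r' s' t' u')
  simp only [map_mul, map_inv, map_zpow] at h
  exact mul_inv_eq_one.mp h

variable {X : Type*} [Group X] {f : Fin 4 → X}

theorem eRels_lift (h1 : f 0 * f 1 * (f 0)⁻¹ = (f 1)⁻¹)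
    (h2 : (f 2) ^ (2:ℤ) = KP (f 0) (f 1) r' s')
    (h3 : f 2 * KP (f 0) (f 1) t' u' * (f 2)⁻¹ = (KP (f 0) (f 1) t' u')⁻¹)
    (h4 : f 3 * f 0 * (f 3)⁻¹ = f 2)
    (h5 : f 3 * f 1 * (f 3)⁻¹ = KP (f 0) (f 1) t' u')
    (h6 : f 3 * f 2 * (f 3)⁻¹ = f 0 * (f 1) ^ (-(2*s)))
    (h7 : (f 3) ^ (2:ℤ) = KP (f 0) (f 1) r s) :
    ∀ ρ ∈ eRels r s r' s' t' u', FreeGroup.lift f ρ = 1 := by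
  intro ρ hρ
  simp only [eRels, Set.mem_insert_iff, Set.mem_singleton_iff] at hρ
  rcases hρ with rfl | rfl | rfl | rfl | rfl | rfl | rfl <;>
    simp only [map_mul, map_inv, map_zpow, FreeGroup.lift_apply_of]
  · exact raw_h1' h1
  · exact raw_h2' h1 h2
  · exact raw_h3' h3
  · exact mul_inv_eq_one.mpr h4
  · exact mul_inv_eq_one.mpr h5
  · exact mul_inv_eq_one.mpr h6
  · exact mul_inv_eq_one.mpr h7

end ERels

section GSide
variable (r s t u r' s' t' u' : ℤ)

/-- Conjugation by `c` of `b` in the sapphire group. -/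
theorem g_conj_b (αb βb : ℤ) (i1 : αb*r+βb*t = 0) (i2 : αb*s+βb*u = 1)
    (i3 : αb*r-βb*t = t') (i4 : αb*s-βb*u = u') :
    (PresentedGroup.of 2 : SapphireGroup r s t u) * .of 1 * (.of 2)⁻¹ =
      KP (.of 0) (.of 1) t' u' := by
  have h := conjP (sap_h1 r s t u) (sap_h2 r s t u) (sap_h3 r s t u) αb βb
  rw [i1, i2, i3, i4] at h
  rw [show KP (PresentedGroup.of 0 : SapphireGroup r s t u) (.of 1) 0 1 = .of 1 by
    simp [KP]] at h
  exact h

theorem g_conj_a2 (αa βa : ℤ) (i1 : αa*r+βa*t = 1) (i2 : αa*s+βa*u = 0)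
    (i3 : αa*r-βa*t = r') (i4 : αa*s-βa*u = s') :
    (PresentedGroup.of 2 : SapphireGroup r s t u) * (.of 0) ^ (2:ℤ) * (.of 2)⁻¹ =
      KP (.of 0) (.of 1) r' s' := by
  have h := conjP (sap_h1 r s t u) (sap_h2 r s t u) (sap_h3 r s t u) αa βa
  rw [i1, i2, i3, i4] at h
  rw [show KP (PresentedGroup.of 0 : SapphireGroup r s t u) (.of 1) 1 0 = (.of 0) ^ (2:ℤ) by
    simp [KP]] at h
  exact h

/-- The homomorphism from the extension presentation to the sapphire group. -/
def Fhom
    (hgb : (PresentedGroup.of 2 : SapphireGroup r s t u) * .of 1 * (.of 2)⁻¹ =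
      KP (.of 0) (.of 1) t' u')
    (hga : (PresentedGroup.of 2 : SapphireGroup r s t u) * (.of 0) ^ (2:ℤ) * (.of 2)⁻¹ =
      KP (.of 0) (.of 1) r' s') :
    EG r s r' s' t' u' →* SapphireGroup r s t u := by
  refine PresentedGroup.toGroup (f := ![.of 0, .of 1, .of 2 * .of 0 * (.of 2)⁻¹, .of 2])
    (eRels_lift r s r' s' t' u' ?_ ?_ ?_ ?_ ?_ ?_ ?_)
  · exact sap_h1 r s t u
  · show ((PresentedGroup.of 2 : SapphireGroup r s t u) * .of 0 * (.of 2)⁻¹) ^ (2:ℤ) =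
      KP (.of 0) (.of 1) r' s'
    rw [conj_zpow, hga]
  · show (PresentedGroup.of 2 : SapphireGroup r s t u) * .of 0 * (.of 2)⁻¹ *
      KP (.of 0) (.of 1) t' u' * ((.of 2) * .of 0 * (.of 2)⁻¹)⁻¹ = (KP (.of 0) (.of 1) t' u')⁻¹
    rw [← hgb]
    have e1 : (PresentedGroup.of 2 : SapphireGroup r s t u) * .of 0 * (.of 2)⁻¹ *
        ((.of 2) * .of 1 * (.of 2)⁻¹) * ((.of 2) * .of 0 * (.of 2)⁻¹)⁻¹ =
        (.of 2) * ((.of 0) * .of 1 * (.of 0)⁻¹) * (.of 2)⁻¹ := by group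
    rw [e1, sap_h1 r s t u]
    group
  · rfl
  · exact hgb
  · show (PresentedGroup.of 2 : SapphireGroup r s t u) * ((.of 2) * .of 0 * (.of 2)⁻¹) *
      (.of 2)⁻¹ = .of 0 * (.of 1) ^ (-(2*s))
    have hsq : (PresentedGroup.of 2 : SapphireGroup r s t u) ^ (2:ℤ) = .of 2 * .of 2 := by
      rw [show (2:ℤ) = 1 + 1 from rfl, zpow_add, zpow_one]
    have e1 : (PresentedGroup.of 2 : SapphireGroup r s t u) * ((.of 2) * .of 0 * (.of 2)⁻¹) *
        (.of 2)⁻¹ = (.of 2) ^ (2:ℤ) * .of 0 * ((.of 2) ^ (2:ℤ))⁻¹ := by rw [hsq]; group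
    rw [e1, sap_h2 r s t u, klein_z_conj (sap_h1 r s t u)]
  · exact sap_h2 r s t u

variable
    (hgb : (PresentedGroup.of 2 : SapphireGroup r s t u) * .of 1 * (.of 2)⁻¹ =
      KP (.of 0) (.of 1) t' u')
    (hga : (PresentedGroup.of 2 : SapphireGroup r s t u) * (.of 0) ^ (2:ℤ) * (.of 2)⁻¹ =
      KP (.of 0) (.of 1) r' s')

theorem Fhom_of0 : Fhom r s t u r' s' t' u' hgb hga (.of 0) = .of 0 :=
  PresentedGroup.toGroup.of _
theorem Fhom_of1 : Fhom r s t u r' s' t' u' hgb hga (.of 1) = .of 1 :=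
  PresentedGroup.toGroup.of _
theorem Fhom_of2 : Fhom r s t u r' s' t' u' hgb hga (.of 2) = .of 2 * .of 0 * (.of 2)⁻¹ :=
  PresentedGroup.toGroup.of _
theorem Fhom_of3 : Fhom r s t u r' s' t' u' hgb hga (.of 3) = .of 2 :=
  PresentedGroup.toGroup.of _

/-- The homomorphism from the sapphire group to the extension presentation. -/
def Jhom (j1 : t*r' + u*t' = -t) (j2 : t*s' + u*u' = -u) :
    SapphireGroup r s t u →* EG r s r' s' t' u' := by
  refine PresentedGroup.toGroup (f := ![.of 0, .of 1, .of 3])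
    (sap_lift r s t u ?_ ?_ ?_)
  · exact eh1 r s r' s' t' u'
  · exact eh7 r s r' s' t' u'
  · show (PresentedGroup.of 3 : EG r s r' s' t' u') * KP (.of 0) (.of 1) t u * (.of 3)⁻¹ =
      (KP (.of 0) (.of 1) t u)⁻¹
    have e1 : (PresentedGroup.of 3 : EG r s r' s' t' u') * KP (.of 0) (.of 1) t u * (.of 3)⁻¹ =
        ((.of 3) * .of 0 * (.of 3)⁻¹) ^ (2*t) * ((.of 3) * .of 1 * (.of 3)⁻¹) ^ u := by
      rw [conj_zpow, conj_zpow]; unfold KP; group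
    rw [e1, eh4 r s r' s' t' u', eh5 r s r' s' t' u', zpow_mul,
      eh2 r s r' s' t' u', KP_zpow (eh1 r s r' s' t' u'), KP_zpow (eh1 r s r' s' t' u'),
      KP_mul (eh1 r s r' s' t' u'), KP_congr j1 j2, ← KP_inv (eh1 r s r' s' t' u')]

variable (j1 : t*r' + u*t' = -t) (j2 : t*s' + u*u' = -u)

theorem Jhom_of0 : Jhom r s t u r' s' t' u' j1 j2 (.of 0) = .of 0 :=
  PresentedGroup.toGroup.of _
theorem Jhom_of1 : Jhom r s t u r' s' t' u' j1 j2 (.of 1) = .of 1 :=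
  PresentedGroup.toGroup.of _
theorem Jhom_of2 : Jhom r s t u r' s' t' u' j1 j2 (.of 2) = .of 3 :=
  PresentedGroup.toGroup.of _

theorem FJ_id (g : SapphireGroup r s t u) :
    Fhom r s t u r' s' t' u' hgb hga (Jhom r s t u r' s' t' u' j1 j2 g) = g := by
  have h : (Fhom r s t u r' s' t' u' hgb hga).comp (Jhom r s t u r' s' t' u' j1 j2) =
      MonoidHom.id _ := by
    apply PresentedGroup.ext
    intro x
    fin_cases x
    · simp [MonoidHom.comp_apply, Jhom_of0, Fhom_of0]
    · simp [MonoidHom.comp_apply, Jhom_of1, Fhom_of1]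
    · simp [MonoidHom.comp_apply, Jhom_of2, Fhom_of3]
  exact DFunLike.congr_fun h g

theorem JF_id (e : EG r s r' s' t' u') :
    Jhom r s t u r' s' t' u' j1 j2 (Fhom r s t u r' s' t' u' hgb hga e) = e := by
  have h : (Jhom r s t u r' s' t' u' j1 j2).comp (Fhom r s t u r' s' t' u' hgb hga) =
      MonoidHom.id _ := by
    apply PresentedGroup.ext
    intro x
    fin_cases x
    · simp [MonoidHom.comp_apply, Jhom_of0, Fhom_of0]
    · simp [MonoidHom.comp_apply, Jhom_of1, Fhom_of1]
    · show Jhom r s t u r' s' t' u' j1 j2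
          (Fhom r s t u r' s' t' u' hgb hga (.of 2)) = .of 2
      rw [Fhom_of2, map_mul, map_mul, map_inv, Jhom_of0, Jhom_of2]
      exact eh4 r s r' s' t' u'
    · simp [MonoidHom.comp_apply, Jhom_of2, Fhom_of3]
  exact DFunLike.congr_fun h e

end GSide

theorem conj_mul_zpow {X : Type*} [Group X] (g x y : X) (m n : ℤ) :
    g * (x ^ m * y ^ n) * g⁻¹ = (g * x * g⁻¹) ^ m * (g * y * g⁻¹) ^ n := by
  rw [conj_zpow, conj_zpow]; group

theorem zpow_two' {X : Type*} [Group X] (x : X) : x ^ (2:ℤ) = x * x := by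
  rw [show (2:ℤ) = 1 + 1 from rfl, zpow_add, zpow_one]

section ThetaSide
variable (s r r' s' t' u' : ℤ)

theorem gp_KPb (k1 : r'*u'-s'*t' = -1) (k2 : u' = -r') :
    KP (PresentedGroup.of 2 : SapphireGroup r' s' t' u')
      (KP (.of 0) (.of 1) t' u') t' u' = .of 1 := by
  show (PresentedGroup.of 2 : SapphireGroup r' s' t' u') ^ (2*t') *
    (KP (.of 0) (.of 1) t' u') ^ u' = .of 1
  rw [zpow_mul, sap_h2 r' s' t' u', KP_zpow (sap_h1 r' s' t' u'),
    KP_zpow (sap_h1 r' s' t' u'), KP_mul (sap_h1 r' s' t' u'),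
    KP_congr (show t'*r' + u'*t' = 0 by linear_combination t'*k2)
      (show t'*s' + u'*u' = 1 by linear_combination -k1 + u'*k2)]
  simp [KP]

theorem gp_q_sq :
    ((PresentedGroup.of 0 : SapphireGroup r' s' t' u') * (.of 1) ^ (-(2*s))) ^ (2:ℤ) =
      (.of 0) ^ (2:ℤ) := by
  rw [zpow_two', zpow_two']
  have h1 := sap_h1 r' s' t' u'
  calc (PresentedGroup.of 0 : SapphireGroup r' s' t' u') * (.of 1) ^ (-(2*s)) *
        ((.of 0) * (.of 1) ^ (-(2*s)))
      = .of 0 * ((.of 1) ^ (-(2*s)) * .of 0) * (.of 1) ^ (-(2*s)) := by group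
  _ = .of 0 * ((.of 0) * (.of 1) ^ (-(-(2*s)))) * (.of 1) ^ (-(2*s)) := by
      rw [klein_swap h1]
  _ = .of 0 * .of 0 := by group

/-- The endomorphism of the target sapphire group corresponding to conjugation by `c`. -/
def θhom (k1 : r'*u'-s'*t' = -1) (k2 : u' = -r') :
    SapphireGroup r' s' t' u' →* SapphireGroup r' s' t' u' := by
  refine PresentedGroup.toGroup
    (f := ![.of 2, KP (.of 0) (.of 1) t' u', .of 0 * (.of 1) ^ (-(2*s))])
    (sap_lift r' s' t' u' ?_ ?_ ?_)
  · exact sap_h3 r' s' t' u'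
  · show ((PresentedGroup.of 0 : SapphireGroup r' s' t' u') * (.of 1) ^ (-(2*s))) ^ (2:ℤ) =
      KP (.of 2) (KP (.of 0) (.of 1) t' u') r' s'
    rw [gp_q_sq]
    show (PresentedGroup.of 0 : SapphireGroup r' s' t' u') ^ (2:ℤ) =
      (.of 2) ^ (2*r') * (KP (.of 0) (.of 1) t' u') ^ s'
    rw [zpow_mul, sap_h2 r' s' t' u', KP_zpow (sap_h1 r' s' t' u'),
      KP_zpow (sap_h1 r' s' t' u'), KP_mul (sap_h1 r' s' t' u'),
      KP_congr (show r'*r' + s'*t' = 1 by linear_combination -k1 + r'*k2)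
        (show r'*s' + s'*u' = 0 by linear_combination s'*k2)]
    simp [KP]
  · show ((PresentedGroup.of 0 : SapphireGroup r' s' t' u') * (.of 1) ^ (-(2*s))) *
      KP (.of 2) (KP (.of 0) (.of 1) t' u') t' u' *
      ((.of 0) * (.of 1) ^ (-(2*s)))⁻¹ = (KP (.of 2) (KP (.of 0) (.of 1) t' u') t' u')⁻¹
    rw [gp_KPb r' s' t' u' k1 k2]
    have e : ((PresentedGroup.of 0 : SapphireGroup r' s' t' u') * (.of 1) ^ (-(2*s))) *
        .of 1 * ((.of 0) * (.of 1) ^ (-(2*s)))⁻¹ = .of 0 * .of 1 * (.of 0)⁻¹ := by group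
    rw [e, sap_h1 r' s' t' u']

variable (k1 : r'*u'-s'*t' = -1) (k2 : u' = -r')

theorem θhom_of0 : θhom s r' s' t' u' k1 k2 (.of 0) = .of 2 :=
  PresentedGroup.toGroup.of _
theorem θhom_of1 : θhom s r' s' t' u' k1 k2 (.of 1) = KP (.of 0) (.of 1) t' u' :=
  PresentedGroup.toGroup.of _
theorem θhom_of2 : θhom s r' s' t' u' k1 k2 (.of 2) = .of 0 * (.of 1) ^ (-(2*s)) :=
  PresentedGroup.toGroup.of _

theorem θ_z (m1 : r*r'+s*t' = r) (m2 : r*s'+s*u' = s) :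
    θhom s r' s' t' u' k1 k2 (KP (.of 0) (.of 1) r s) = KP (.of 0) (.of 1) r s := by
  show θhom s r' s' t' u' k1 k2 ((.of 0) ^ (2*r) * (.of 1) ^ s) = KP (.of 0) (.of 1) r s
  rw [map_mul, map_zpow, map_zpow, θhom_of0, θhom_of1, zpow_mul, sap_h2 r' s' t' u',
    KP_zpow (sap_h1 r' s' t' u'), KP_zpow (sap_h1 r' s' t' u'),
    KP_mul (sap_h1 r' s' t' u'), KP_congr m1 m2]

theorem θ_θ (m1 : r*r'+s*t' = r) (m2 : r*s'+s*u' = s) (x : SapphireGroup r' s' t' u') :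
    θhom s r' s' t' u' k1 k2 (θhom s r' s' t' u' k1 k2 x) =
      KP (.of 0) (.of 1) r s * x * (KP (.of 0) (.of 1) r s)⁻¹ := by
  have h1 := sap_h1 r' s' t' u'
  have hcomp : (θhom s r' s' t' u' k1 k2).comp (θhom s r' s' t' u' k1 k2) =
      (MulAut.conj (KP (PresentedGroup.of 0 : SapphireGroup r' s' t' u') (.of 1) r s)).toMonoidHom := by
    apply PresentedGroup.ext
    intro i
    fin_cases i
    · show θhom s r' s' t' u' k1 k2 (θhom s r' s' t' u' k1 k2 (.of 0)) =
        KP (PresentedGroup.of 0) (.of 1) r s * .of 0 * (KP (.of 0) (.of 1) r s)⁻¹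
      rw [θhom_of0, θhom_of2, klein_z_conj h1]
    · show θhom s r' s' t' u' k1 k2 (θhom s r' s' t' u' k1 k2 (.of 1)) =
        KP (PresentedGroup.of 0) (.of 1) r s * .of 1 * (KP (.of 0) (.of 1) r s)⁻¹
      have hcom : Commute (KP (PresentedGroup.of 0 : SapphireGroup r' s' t' u') (.of 1) r s)
          (.of 1) := by
        have h2 : Commute ((PresentedGroup.of 0 : SapphireGroup r' s' t' u') ^ (2*r)) (.of 1) := by
          have := klein_commA h1 r 1
          rwa [zpow_one] at this
        exact h2.mul_left ((Commute.refl _).zpow_left s)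
      rw [hcom.eq, θhom_of1]
      show θhom s r' s' t' u' k1 k2 ((.of 0) ^ (2*t') * (.of 1) ^ u') =
        .of 1 * KP (.of 0) (.of 1) r s * (KP (.of 0) (.of 1) r s)⁻¹
      rw [map_mul, map_zpow, map_zpow, θhom_of0, θhom_of1]
      have := gp_KPb r' s' t' u' k1 k2
      rw [show KP (PresentedGroup.of 2 : SapphireGroup r' s' t' u')
          (KP (.of 0) (.of 1) t' u') t' u' =
        (.of 2) ^ (2*t') * (KP (.of 0) (.of 1) t' u') ^ u' from rfl] at this
      rw [this]
      group
    · show θhom s r' s' t' u' k1 k2 (θhom s r' s' t' u' k1 k2 (.of 2)) =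
        KP (PresentedGroup.of 0) (.of 1) r s * .of 2 * (KP (.of 0) (.of 1) r s)⁻¹
      rw [θhom_of2, map_mul, map_zpow, θhom_of0, θhom_of1]
      -- RHS computation
      have hz_split : KP (PresentedGroup.of 0 : SapphireGroup r' s' t' u') (.of 1) r s =
          (KP (.of 0) (.of 1) r' s') ^ r * (KP (.of 0) (.of 1) t' u') ^ s := by
        rw [KP_zpow h1, KP_zpow h1, KP_mul h1]
        exact (KP_congr m1 m2).symm
      have hcc : (PresentedGroup.of 2 : SapphireGroup r' s' t' u')⁻¹ *
          KP (.of 0) (.of 1) r' s' * .of 2 = KP (.of 0) (.of 1) r' s' := by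
        rw [← sap_h2 r' s' t' u']; group
      have hcw : (PresentedGroup.of 2 : SapphireGroup r' s' t' u')⁻¹ *
          KP (.of 0) (.of 1) t' u' * .of 2 = (KP (.of 0) (.of 1) t' u')⁻¹ := by
        have h4 := congrArg Inv.inv (sap_h3 r' s' t' u')
        simp only [mul_inv_rev, inv_inv] at h4
        conv_lhs => rw [← h4]
        group
      have hzc : (PresentedGroup.of 2 : SapphireGroup r' s' t' u')⁻¹ *
          KP (.of 0) (.of 1) r s * .of 2 =
          (KP (.of 0) (.of 1) r' s') ^ r * ((KP (.of 0) (.of 1) t' u')⁻¹) ^ s := by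
        have e := conj_mul_zpow (PresentedGroup.of 2 : SapphireGroup r' s' t' u')⁻¹
          (KP (.of 0) (.of 1) r' s') (KP (.of 0) (.of 1) t' u') r s
        simp only [inv_inv] at e
        rw [hz_split, e, hcc, hcw]
      have final : KP (PresentedGroup.of 0 : SapphireGroup r' s' t' u') (.of 1) r s * .of 2 *
          (KP (.of 0) (.of 1) r s)⁻¹ = .of 2 * (KP (.of 0) (.of 1) t' u') ^ (-(2*s)) := by
        calc KP (PresentedGroup.of 0 : SapphireGroup r' s' t' u') (.of 1) r s * .of 2 *
            (KP (.of 0) (.of 1) r s)⁻¹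
            = .of 2 * (((.of 2)⁻¹ * KP (.of 0) (.of 1) r s * .of 2) *
              (KP (.of 0) (.of 1) r s)⁻¹) := by group
        _ = .of 2 * ((KP (.of 0) (.of 1) r' s') ^ r * ((KP (.of 0) (.of 1) t' u')⁻¹) ^ s *
              (KP (.of 0) (.of 1) r s)⁻¹) := by rw [hzc]
        _ = .of 2 * (KP (.of 0) (.of 1) t' u') ^ (-(2*s)) := by
            rw [inv_zpow', KP_inv h1, KP_zpow h1, KP_zpow h1, KP_zpow h1, KP_mul h1,
              KP_mul h1, KP_congr (show r*r' + -s*t' + -r = (-(2*s))*t' by linear_combination m1)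
                (show r*s' + -s*u' + -s = (-(2*s))*u' by linear_combination m2)]
      rw [final]
  have := DFunLike.congr_fun hcomp x
  simpa using this

end ThetaSide

/-- Type synonym for `H × Bool` carrying the twisted group structure. -/
def TwProd (H : Type*) := H × Bool

section Twist
variable {H : Type*} [Group H]

/-- Constructor for `TwProd`. -/
def TwProd.mk (x : H) (b : Bool) : TwProd H := (x, b)

/-- First projection. -/
def TwProd.g (p : TwProd H) : H := Prod.fst p

/-- Second projection. -/
def TwProd.b (p : TwProd H) : Bool := Prod.snd p

@[simp] theorem TwProd.g_mk (x : H) (b : Bool) : (TwProd.mk x b).g = x := rfl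
@[simp] theorem TwProd.b_mk (x : H) (b : Bool) : (TwProd.mk x b).b = b := rfl
theorem TwProd.eta (p : TwProd H) : TwProd.mk p.g p.b = p := rfl
theorem TwProd.mk_inj {x y : H} {b c : Bool} :
    TwProd.mk x b = TwProd.mk y c ↔ x = y ∧ b = c := Prod.mk.injEq _ _ _ _ ▸ Iff.rfl

variable (θ : H →* H) (z : H)

def tmul : TwProd H → TwProd H → TwProd H :=
  fun p q => TwProd.mk (p.g * (cond p.b (θ q.g) q.g) * (cond (p.b && q.b) z 1)) (xor p.b q.b)

def tinv : TwProd H → TwProd H :=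
  fun p => TwProd.mk (cond p.b (θ (z⁻¹ * p.g⁻¹)) p.g⁻¹) p.b

/-- The twisted group structure on `TwProd H` realizing the extension of `ℤ/2` by `H`. -/
def twistGroup (hz : θ z = z) (hsq : ∀ x, θ (θ x) = z * x * z⁻¹) : Group (TwProd H) :=
  letI : Mul (TwProd H) := ⟨tmul θ z⟩
  letI : One (TwProd H) := ⟨TwProd.mk 1 false⟩
  letI : Inv (TwProd H) := ⟨tinv θ z⟩
  Group.ofLeftAxioms
    (by
      rintro ⟨x, m⟩ ⟨y, n⟩ ⟨w, p⟩
      show tmul θ z (tmul θ z (TwProd.mk x m) (TwProd.mk y n)) (TwProd.mk w p) =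
        tmul θ z (TwProd.mk x m) (tmul θ z (TwProd.mk y n) (TwProd.mk w p))
      cases m <;> cases n <;> cases p <;>
        simp only [tmul, TwProd.g_mk, TwProd.b_mk, cond_true, cond_false, Bool.true_and,
          Bool.false_and, Bool.and_true, Bool.and_false, Bool.true_xor, Bool.false_xor,
          Bool.xor_true, Bool.xor_false, Bool.not_true, Bool.not_false, map_mul, map_one,
          mul_one, one_mul, hsq, hz, TwProd.mk_inj, and_true, true_and, and_self] <;>
        group
      )
    (by
      rintro ⟨y, n⟩
      show tmul θ z (TwProd.mk 1 false) (TwProd.mk y n) = TwProd.mk y n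
      simp [tmul])
    (by
      rintro ⟨x, m⟩
      show tmul θ z (tinv θ z (TwProd.mk x m)) (TwProd.mk x m) = TwProd.mk 1 false
      cases m
      · simp [tmul, tinv]
      · show tmul θ z (TwProd.mk (θ (z⁻¹ * x⁻¹)) true) (TwProd.mk x true) = TwProd.mk 1 false
        simp only [tmul, TwProd.g_mk, TwProd.b_mk, cond_true, Bool.and_self, Bool.xor_self,
          TwProd.mk_inj, and_true, true_and, and_self]
        rw [← map_mul, inv_mul_cancel_right, map_inv, hz]
        simp)

variable (hz : θ z = z) (hsq : ∀ x, θ (θ x) = z * x * z⁻¹)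

theorem twist_mul_eq (p q : TwProd H) :
    (letI := twistGroup θ z hz hsq; p * q) = tmul θ z p q := rfl

theorem twist_one_eq : (letI := twistGroup θ z hz hsq; (1 : TwProd H)) = TwProd.mk 1 false := rfl

theorem twist_inv_eq (p : TwProd H) :
    (letI := twistGroup θ z hz hsq; p⁻¹) = tinv θ z p := rfl

end Twist

theorem aux_ker_iso (r s t u r' s' t' u' αb βb αa βa : ℤ)
    (ib1 : αb*r+βb*t = 0) (ib2 : αb*s+βb*u = 1) (ib3 : αb*r-βb*t = t') (ib4 : αb*s-βb*u = u')
    (ia1 : αa*r+βa*t = 1) (ia2 : αa*s+βa*u = 0) (ia3 : αa*r-βa*t = r') (ia4 : αa*s-βa*u = s')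
    (j1 : t*r' + u*t' = -t) (j2 : t*s' + u*u' = -u)
    (k1 : r'*u' - s'*t' = -1) (k2 : u' = -r')
    (m1 : r*r' + s*t' = r) (m2 : r*s' + s*u' = s)
    (φ : SapphireGroup r s t u →* Multiplicative (ZMod 2))
    (ha : φ (PresentedGroup.of 0) = Multiplicative.ofAdd (0 : ZMod 2))
    (hb : φ (PresentedGroup.of 1) = Multiplicative.ofAdd (0 : ZMod 2))
    (hc : φ (PresentedGroup.of 2) = Multiplicative.ofAdd (1 : ZMod 2)) :
    Nonempty (φ.ker ≃* SapphireGroup r' s' t' u') := by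
  have hgb := g_conj_b r s t u t' u' αb βb ib1 ib2 ib3 ib4
  have hga := g_conj_a2 r s t u r' s' αa βa ia1 ia2 ia3 ia4
  have h1' := sap_h1 r' s' t' u'
  have hz : θhom s r' s' t' u' k1 k2 (KP (PresentedGroup.of 0) (.of 1) r s) =
      KP (PresentedGroup.of 0) (.of 1) r s := θ_z s r r' s' t' u' k1 k2 m1 m2
  have hsq : ∀ x, θhom s r' s' t' u' k1 k2 (θhom s r' s' t' u' k1 k2 x) =
      KP (PresentedGroup.of 0) (.of 1) r s * x * (KP (PresentedGroup.of 0) (.of 1) r s)⁻¹ :=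
    θ_θ s r r' s' t' u' k1 k2 m1 m2
  letI : Group (TwProd (SapphireGroup r' s' t' u')) :=
    twistGroup (θhom s r' s' t' u' k1 k2) (KP (PresentedGroup.of 0) (.of 1) r s) hz hsq
  have tm : ∀ p q : TwProd (SapphireGroup r' s' t' u'),
      p * q = tmul (θhom s r' s' t' u' k1 k2) (KP (PresentedGroup.of 0) (.of 1) r s) p q :=
    twist_mul_eq _ _ hz hsq
  have tone : (1 : TwProd (SapphireGroup r' s' t' u')) = TwProd.mk 1 false :=
    twist_one_eq _ _ hz hsq
  have tiv : ∀ p : TwProd (SapphireGroup r' s' t' u'),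
      p⁻¹ = tinv (θhom s r' s' t' u' k1 k2) (KP (PresentedGroup.of 0) (.of 1) r s) p :=
    twist_inv_eq _ _ hz hsq
  -- basic computation rules in the twisted group
  have L1 : ∀ x y : SapphireGroup r' s' t' u',
      TwProd.mk x false * TwProd.mk y false = TwProd.mk (x * y) false := by
    intro x y; rw [tm]; simp [tmul]
  have L2 : ∀ x : SapphireGroup r' s' t' u',
      (TwProd.mk x false)⁻¹ = TwProd.mk x⁻¹ false := by
    intro x; rw [tiv]; simp [tinv]
  have L3 : ∀ (x : SapphireGroup r' s' t' u') (n : ℤ),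
      (TwProd.mk x false) ^ n = TwProd.mk (x ^ n) false := by
    intro x n
    induction n using Int.induction_on with
    | zero => rw [zpow_zero, zpow_zero, tone]
    | succ n ih => rw [zpow_add_one, zpow_add_one, ih, L1]
    | pred n ih => rw [zpow_sub_one, zpow_sub_one, ih, L2, L1]
  have L4 : ∀ (x y : SapphireGroup r' s' t' u') (i j : ℤ),
      KP (TwProd.mk x false) (TwProd.mk y false) i j = TwProd.mk (KP x y i j) false := by
    intro x y i j
    show (TwProd.mk x false) ^ (2*i) * (TwProd.mk y false) ^ j = TwProd.mk (KP x y i j) false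
    rw [L3, L3, L1]; rfl
  have L5 : ∀ x : SapphireGroup r' s' t' u',
      TwProd.mk 1 true * TwProd.mk x false * (TwProd.mk 1 true)⁻¹ =
        TwProd.mk (θhom s r' s' t' u' k1 k2 x) false := by
    intro x
    rw [tiv, tm, tm]
    simp [tmul, tinv, map_mul, map_inv, hz]
  have L6 : (TwProd.mk 1 true : TwProd (SapphireGroup r' s' t' u')) ^ (2:ℤ) =
      TwProd.mk (KP (PresentedGroup.of 0) (.of 1) r s) false := by
    rw [zpow_two', tm]; simp [tmul]
  -- the homomorphism from the extension presentation to the twisted group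
  let hM : EG r s r' s' t' u' →* TwProd (SapphireGroup r' s' t' u') :=
    PresentedGroup.toGroup
      (f := ![TwProd.mk (PresentedGroup.of 0 : SapphireGroup r' s' t' u') false,
        TwProd.mk (PresentedGroup.of 1 : SapphireGroup r' s' t' u') false,
        TwProd.mk (PresentedGroup.of 2 : SapphireGroup r' s' t' u') false,
        TwProd.mk 1 true])
      (eRels_lift r s r' s' t' u'
        (by show TwProd.mk (PresentedGroup.of 0) false * TwProd.mk (PresentedGroup.of 1 : SapphireGroup r' s' t' u') false *
              (TwProd.mk (PresentedGroup.of 0 : SapphireGroup r' s' t' u') false)⁻¹ = (TwProd.mk (PresentedGroup.of 1 : SapphireGroup r' s' t' u') false)⁻¹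
            rw [L2, L2, L1, L1, sap_h1 r' s' t' u'])
        (by show (TwProd.mk (PresentedGroup.of 2) false) ^ (2:ℤ) =
              KP (TwProd.mk (PresentedGroup.of 0 : SapphireGroup r' s' t' u') false) (TwProd.mk (PresentedGroup.of 1 : SapphireGroup r' s' t' u') false) r' s'
            rw [L3, L4, sap_h2 r' s' t' u'])
        (by show TwProd.mk (PresentedGroup.of 2) false *
              KP (TwProd.mk (PresentedGroup.of 0 : SapphireGroup r' s' t' u') false) (TwProd.mk (PresentedGroup.of 1 : SapphireGroup r' s' t' u') false) t' u' *
              (TwProd.mk (PresentedGroup.of 2 : SapphireGroup r' s' t' u') false)⁻¹ =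
              (KP (TwProd.mk (PresentedGroup.of 0 : SapphireGroup r' s' t' u') false) (TwProd.mk (PresentedGroup.of 1 : SapphireGroup r' s' t' u') false) t' u')⁻¹
            rw [L4, L2, L2, L1, L1, sap_h3 r' s' t' u'])
        (by show TwProd.mk (1 : SapphireGroup r' s' t' u') true * TwProd.mk (PresentedGroup.of 0 : SapphireGroup r' s' t' u') false *
              (TwProd.mk 1 true)⁻¹ = TwProd.mk (PresentedGroup.of 2 : SapphireGroup r' s' t' u') false
            rw [L5, θhom_of0])
        (by show TwProd.mk (1 : SapphireGroup r' s' t' u') true * TwProd.mk (PresentedGroup.of 1 : SapphireGroup r' s' t' u') false *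
              (TwProd.mk 1 true)⁻¹ =
              KP (TwProd.mk (PresentedGroup.of 0 : SapphireGroup r' s' t' u') false) (TwProd.mk (PresentedGroup.of 1 : SapphireGroup r' s' t' u') false) t' u'
            rw [L5, θhom_of1, L4])
        (by show TwProd.mk (1 : SapphireGroup r' s' t' u') true * TwProd.mk (PresentedGroup.of 2 : SapphireGroup r' s' t' u') false *
              (TwProd.mk 1 true)⁻¹ = TwProd.mk (PresentedGroup.of 0 : SapphireGroup r' s' t' u') false * (TwProd.mk (PresentedGroup.of 1 : SapphireGroup r' s' t' u') false) ^ (-(2*s))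
            rw [L5, θhom_of2, L3, L1])
        (by show (TwProd.mk (1 : SapphireGroup r' s' t' u') true) ^ (2:ℤ) =
              KP (TwProd.mk (PresentedGroup.of 0 : SapphireGroup r' s' t' u') false) (TwProd.mk (PresentedGroup.of 1 : SapphireGroup r' s' t' u') false) r s
            rw [L6, L4]))
  have hM_of0 : hM (.of 0) = TwProd.mk (PresentedGroup.of 0 : SapphireGroup r' s' t' u') false := PresentedGroup.toGroup.of _
  have hM_of1 : hM (.of 1) = TwProd.mk (PresentedGroup.of 1 : SapphireGroup r' s' t' u') false := PresentedGroup.toGroup.of _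
  have hM_of2 : hM (.of 2) = TwProd.mk (PresentedGroup.of 2 : SapphireGroup r' s' t' u') false := PresentedGroup.toGroup.of _
  have hM_of3 : hM (.of 3) = TwProd.mk 1 true := PresentedGroup.toGroup.of _
  -- the inclusion of the target sapphire group into the extension presentation
  let ι : SapphireGroup r' s' t' u' →* EG r s r' s' t' u' :=
    PresentedGroup.toGroup (f := ![(PresentedGroup.of 0 : EG r s r' s' t' u'), PresentedGroup.of 1, PresentedGroup.of 2])
      (sap_lift r' s' t' u' (eh1 r s r' s' t' u') (eh2 r s r' s' t' u') (eh3 r s r' s' t' u'))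
  have ι_of0 : ι (.of 0) = (.of 0 : EG r s r' s' t' u') := PresentedGroup.toGroup.of _
  have ι_of1 : ι (.of 1) = (.of 1 : EG r s r' s' t' u') := PresentedGroup.toGroup.of _
  have ι_of2 : ι (.of 2) = (.of 2 : EG r s r' s' t' u') := PresentedGroup.toGroup.of _
  have ιKP : ∀ i j : ℤ, ι (KP (.of 0) (.of 1) i j) =
      KP (.of 0 : EG r s r' s' t' u') (.of 1) i j := by
    intro i j
    show ι ((PresentedGroup.of 0) ^ (2*i) * (.of 1) ^ j) = _
    rw [map_mul, map_zpow, map_zpow, ι_of0, ι_of1]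
    rfl
  -- h ∘ ι is the canonical inclusion
  have hι : ∀ y, hM (ι y) = TwProd.mk y false := by
    have inl_hom : ∀ x y : SapphireGroup r' s' t' u',
        TwProd.mk (x * y) false = TwProd.mk x false * TwProd.mk y false := fun x y => (L1 x y).symm
    have hcomp : hM.comp ι =
        { toFun := fun y => TwProd.mk y false,
          map_one' := tone.symm, map_mul' := inl_hom } := by
      apply PresentedGroup.ext
      intro i
      fin_cases i
      · show hM (ι (.of 0)) = TwProd.mk (PresentedGroup.of 0 : SapphireGroup r' s' t' u') false
        rw [ι_of0, hM_of0]
      · show hM (ι (.of 1)) = TwProd.mk (PresentedGroup.of 1 : SapphireGroup r' s' t' u') false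
        rw [ι_of1, hM_of1]
      · show hM (ι (.of 2)) = TwProd.mk (PresentedGroup.of 2 : SapphireGroup r' s' t' u') false
        rw [ι_of2, hM_of2]
    intro y
    exact DFunLike.congr_fun hcomp y
  -- conjugation by the extra generator corresponds to θ
  have conjD : ∀ y, (.of 3 : EG r s r' s' t' u') * ι y * (.of 3)⁻¹ =
      ι (θhom s r' s' t' u' k1 k2 y) := by
    have hcomp : ((MulAut.conj (.of 3 : EG r s r' s' t' u')).toMonoidHom).comp ι =
        ι.comp (θhom s r' s' t' u' k1 k2) := by
      apply PresentedGroup.ext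
      intro i
      fin_cases i
      · show (.of 3 : EG r s r' s' t' u') * ι (.of 0) * (.of 3)⁻¹ =
          ι (θhom s r' s' t' u' k1 k2 (.of 0))
        rw [ι_of0, θhom_of0, ι_of2]
        exact eh4 r s r' s' t' u'
      · show (.of 3 : EG r s r' s' t' u') * ι (.of 1) * (.of 3)⁻¹ =
          ι (θhom s r' s' t' u' k1 k2 (.of 1))
        rw [ι_of1, θhom_of1, ιKP]
        exact eh5 r s r' s' t' u'
      · show (.of 3 : EG r s r' s' t' u') * ι (.of 2) * (.of 3)⁻¹ =
          ι (θhom s r' s' t' u' k1 k2 (.of 2))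
        rw [ι_of2, θhom_of2, map_mul, map_zpow, ι_of0, ι_of1]
        exact eh6 r s r' s' t' u'
    intro y
    exact DFunLike.congr_fun hcomp y
  have hDι : ∀ y, (.of 3 : EG r s r' s' t' u') * ι y =
      ι (θhom s r' s' t' u' k1 k2 y) * .of 3 := by
    intro y
    rw [← conjD y]; group
  have ιz : ι (KP (.of 0) (.of 1) r s) = (.of 3 : EG r s r' s' t' u') * .of 3 := by
    rw [ιKP, ← eh7 r s r' s' t' u', zpow_two']
  -- the normal form lemma
  have hsec : ∀ e : EG r s r' s' t' u',
      e = ι ((hM e).g) * (cond (hM e).b (.of 3) 1) := by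
    intro e
    induction e using PresentedGroup.induction_on with
    | _ w => ?_
    induction w using FreeGroup.induction_on with
    | C1 =>
        show (1 : EG r s r' s' t' u') = ι ((hM 1).g) * (cond (hM 1).b (.of 3) 1)
        rw [map_one, tone]
        simp
    | of x =>
        fin_cases x
        · show (.of 0 : EG r s r' s' t' u') = ι ((hM (.of 0)).g) * (cond (hM (.of 0)).b (.of 3) 1)
          rw [hM_of0]; simp [ι_of0]
        · show (.of 1 : EG r s r' s' t' u') = ι ((hM (.of 1)).g) * (cond (hM (.of 1)).b (.of 3) 1)
          rw [hM_of1]; simp [ι_of1]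
        · show (.of 2 : EG r s r' s' t' u') = ι ((hM (.of 2)).g) * (cond (hM (.of 2)).b (.of 3) 1)
          rw [hM_of2]; simp [ι_of2]
        · show (.of 3 : EG r s r' s' t' u') = ι ((hM (.of 3)).g) * (cond (hM (.of 3)).b (.of 3) 1)
          rw [hM_of3]; simp
    | inv_of x _ =>
        fin_cases x
        · show ((.of 0 : EG r s r' s' t' u'))⁻¹ =
            ι ((hM (.of 0)⁻¹).g) * (cond (hM (.of 0)⁻¹).b (.of 3) 1)
          rw [map_inv, hM_of0, tiv]
          simp [tinv, map_inv, ι_of0]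
        · show ((.of 1 : EG r s r' s' t' u'))⁻¹ =
            ι ((hM (.of 1)⁻¹).g) * (cond (hM (.of 1)⁻¹).b (.of 3) 1)
          rw [map_inv, hM_of1, tiv]
          simp [tinv, map_inv, ι_of1]
        · show ((.of 2 : EG r s r' s' t' u'))⁻¹ =
            ι ((hM (.of 2)⁻¹).g) * (cond (hM (.of 2)⁻¹).b (.of 3) 1)
          rw [map_inv, hM_of2, tiv]
          simp [tinv, map_inv, ι_of2]
        · show ((.of 3 : EG r s r' s' t' u'))⁻¹ =
            ι ((hM (.of 3)⁻¹).g) * (cond (hM (.of 3)⁻¹).b (.of 3) 1)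
          rw [map_inv, hM_of3, tiv]
          simp only [tinv, TwProd.g_mk, TwProd.b_mk, cond_true, inv_one, mul_one, map_inv, hz]
          rw [ιz]
          group
    | mul x y ihx ihy =>
        have N2 : ∀ x y : SapphireGroup r' s' t' u',
            (ι x * PresentedGroup.of 3) * ι y =
              ι (x * θhom s r' s' t' u' k1 k2 y) * PresentedGroup.of 3 := by
          intro x y
          rw [map_mul, mul_assoc, mul_assoc, ← hDι]
        have N3 : ∀ x y : SapphireGroup r' s' t' u',
            (ι x * PresentedGroup.of 3) * (ι y * PresentedGroup.of 3) =
              ι (x * θhom s r' s' t' u' k1 k2 y *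
                KP (PresentedGroup.of 0) (PresentedGroup.of 1) r s) := by
          intro x y
          rw [← mul_assoc, N2, map_mul, map_mul, ιz, map_mul, mul_assoc]
        show PresentedGroup.mk _ (x * y) = _
        rw [map_mul, map_mul, tm]
        cases hpb : (hM (PresentedGroup.mk _ x)).b <;> cases hqb : (hM (PresentedGroup.mk _ y)).b <;>
          rw [hpb] at ihx <;> rw [hqb] at ihy <;>
          simp only [tmul, TwProd.g_mk, TwProd.b_mk, hpb, hqb, cond_true, cond_false,
            Bool.and_self, Bool.and_true, Bool.and_false, Bool.true_and, Bool.false_and,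
            Bool.xor_self, Bool.xor_false, Bool.false_xor, Bool.true_xor, Bool.xor_true,
            Bool.not_true, Bool.not_false, mul_one, one_mul] at ihx ihy ⊢
        · conv_lhs => rw [ihx, ihy]
          rw [map_mul]
        · conv_lhs => rw [ihx, ihy]
          rw [map_mul]
          group
        · conv_lhs => rw [ihx, ihy]
          rw [N2]
        · conv_lhs => rw [ihx, ihy]
          rw [N3]
  -- the projection to ZMod 2 from the twisted group
  let π : TwProd (SapphireGroup r' s' t' u') →* Multiplicative (ZMod 2) :=
    { toFun := fun p => Multiplicative.ofAdd (cond p.b 1 0),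
      map_one' := by rw [tone]; rfl,
      map_mul' := by
        intro p q
        rw [tm]
        show Multiplicative.ofAdd (cond (xor p.b q.b) (1 : ZMod 2) 0) =
          Multiplicative.ofAdd (cond p.b (1 : ZMod 2) 0) *
            Multiplicative.ofAdd (cond q.b (1 : ZMod 2) 0)
        cases hp : p.b <;> cases hq : q.b <;> decide }
  have hπ : ∀ p, π p = Multiplicative.ofAdd (cond p.b 1 0) := fun p => rfl
  -- φ ∘ F = π ∘ h
  have hφF : ∀ e, φ (Fhom r s t u r' s' t' u' hgb hga e) = π (hM e) := by
    have hcomp : φ.comp (Fhom r s t u r' s' t' u' hgb hga) = π.comp hM := by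
      apply PresentedGroup.ext
      intro i
      fin_cases i
      · show φ (Fhom r s t u r' s' t' u' hgb hga (.of 0)) = π (hM (.of 0))
        rw [Fhom_of0, hM_of0, ha, hπ]
        rfl
      · show φ (Fhom r s t u r' s' t' u' hgb hga (.of 1)) = π (hM (.of 1))
        rw [Fhom_of1, hM_of1, hb, hπ]
        rfl
      · show φ (Fhom r s t u r' s' t' u' hgb hga (.of 2)) = π (hM (.of 2))
        rw [Fhom_of2, hM_of2, map_mul, map_mul, map_inv, ha, hc, hπ]
        show Multiplicative.ofAdd (1 : ZMod 2) * Multiplicative.ofAdd (0 : ZMod 2) *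
          (Multiplicative.ofAdd (1 : ZMod 2))⁻¹ = Multiplicative.ofAdd (0 : ZMod 2)
        decide
      · show φ (Fhom r s t u r' s' t' u' hgb hga (.of 3)) = π (hM (.of 3))
        rw [Fhom_of3, hM_of3, hc, hπ]
        rfl
    intro e
    exact DFunLike.congr_fun hcomp e
  -- kernel elements have second component false
  have hker_b : ∀ g : SapphireGroup r s t u, g ∈ φ.ker →
      (hM (Jhom r s t u r' s' t' u' j1 j2 g)).b = false := by
    intro g hg
    have h1 : π (hM (Jhom r s t u r' s' t' u' j1 j2 g)) = 1 := by
      rw [← hφF, FJ_id r s t u r' s' t' u' hgb hga j1 j2]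
      exact hg
    rw [hπ] at h1
    cases hpb : (hM (Jhom r s t u r' s' t' u' j1 j2 g)).b
    · rfl
    · rw [hpb] at h1
      exact absurd h1 (by decide)
  -- assembling the isomorphism
  refine ⟨{ toFun := fun k => (hM (Jhom r s t u r' s' t' u' j1 j2 k.1)).g,
            invFun := fun y => ⟨Fhom r s t u r' s' t' u' hgb hga (ι y), ?_⟩,
            left_inv := ?_, right_inv := ?_, map_mul' := ?_ }⟩
  · show Fhom r s t u r' s' t' u' hgb hga (ι y) ∈ φ.ker
    rw [MonoidHom.mem_ker, hφF, hι, hπ]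
    rfl
  · intro k
    apply Subtype.ext
    show Fhom r s t u r' s' t' u' hgb hga
      (ι ((hM (Jhom r s t u r' s' t' u' j1 j2 k.1)).g)) = k.1
    have hs := hsec (Jhom r s t u r' s' t' u' j1 j2 k.1)
    rw [hker_b k.1 k.2, cond_false, mul_one] at hs
    rw [← hs, FJ_id r s t u r' s' t' u' hgb hga j1 j2]
  · intro y
    show (hM (Jhom r s t u r' s' t' u' j1 j2
      (Fhom r s t u r' s' t' u' hgb hga (ι y)))).g = y
    rw [JF_id r s t u r' s' t' u' hgb hga j1 j2, hι, TwProd.g_mk]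
  · intro k l
    show (hM (Jhom r s t u r' s' t' u' j1 j2 (k.1 * l.1))).g = _
    rw [map_mul, map_mul, tm]
    show (TwProd.mk _ _).g = _
    rw [TwProd.g_mk, hker_b k.1 k.2]
    simp

theorem stmt2 (r s t u : ℤ)
    (φ : SapphireGroup r s t u →* Multiplicative (ZMod 2))
    (ha : φ (PresentedGroup.of 0) = Multiplicative.ofAdd (0 : ZMod 2))
    (hb : φ (PresentedGroup.of 1) = Multiplicative.ofAdd (0 : ZMod 2))
    (hc : φ (PresentedGroup.of 2) = Multiplicative.ofAdd (1 : ZMod 2)) :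
    (r * u - s * t = 1 →
      Nonempty (φ.ker ≃*
        SapphireGroup (r * u + s * t) (2 * s * u) (-(2 * r * t)) (-(r * u + s * t)))) ∧
    (r * u - s * t = -1 →
      Nonempty (φ.ker ≃*
        SapphireGroup (-(r * u + s * t)) (-(2 * s * u)) (2 * r * t) (r * u + s * t))) := by
  constructor
  · intro h
    exact aux_ker_iso r s t u (r*u+s*t) (2*s*u) (-(2*r*t)) (-(r*u+s*t)) (-t) r u (-s)
      (by ring) (by linear_combination h) (by ring) (by ring)
      (by linear_combination h) (by ring) (by ring) (by ring)
      (by linear_combination (-t)*h) (by linear_combination (-u)*h)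
      (by linear_combination (-(1+r*u-s*t))*h) (by ring)
      (by linear_combination r*h) (by linear_combination s*h)
      φ ha hb hc
  · intro h
    exact aux_ker_iso r s t u (-(r*u+s*t)) (-(2*s*u)) (2*r*t) (r*u+s*t) t (-r) (-u) s
      (by ring) (by linear_combination -h) (by ring) (by ring)
      (by linear_combination -h) (by ring) (by ring) (by ring)
      (by linear_combination t*h) (by linear_combination u*h)
      (by linear_combination (1-(r*u-s*t))*h) (by ring)
      (by linear_combination (-r)*h) (by linear_combination (-s)*h)
      φ ha hb hc
end
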